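/- arXiv:1501.02414 — 7 statements merged into one kernel-verified Lean document; each statement's English description precedes it below -/
import Mathlib

section
/- Let χ ∈ (0,1), d a positive integer, h ∈ ℝ^d, {Ā_k} a sequence of symmetric positive-semidefinite real d×d matrices and {b̄_k} a sequence in ℝ^d, and let {h̄_k} satisfy h̄_{k+1} = h̄_k + k^{-χ}(b̄_k − Ā_k h̄_k) for all k ≥ 1. If k^{1−χ}|h̄_k − h| → 0 as k → ∞ and the sequence n^{-χ} Σ_{k=1}^n k^{χ−1}‖Ā_k‖ is bounded in n, then |n^{-χ} Σ_{k=1}^n (b̄_k − Ā_k h)| → 0 as n → ∞. -/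
open Filter Finset
open scoped RealInnerProductSpace Topology

lemma aux_tendsto (χ : ℝ) (hχ0 : 0 < χ) (w δ : ℕ → ℝ)
    (hw : ∀ k, 0 ≤ w k) (hδ : ∀ k, 0 ≤ δ k)
    (hδ0 : Tendsto δ atTop (𝓝 0))
    (K : ℝ) (hK : ∀ n : ℕ, (n : ℝ) ^ (-χ) * ∑ k ∈ Icc 1 n, w k ≤ K) :
    Tendsto (fun n : ℕ => (n : ℝ) ^ (-χ) * ∑ k ∈ Icc 1 n, w k * δ k) atTop (𝓝 0) := by
  rw [Metric.tendsto_atTop]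
  intro ε hε
  have hK0 : 0 ≤ K := by
    have h0 := hK 0
    simpa [Real.zero_rpow (neg_ne_zero.mpr hχ0.ne')] using h0
  have hK1 : 0 < K + 1 := by linarith
  set ε' := ε / (2 * (K + 1)) with hε'def
  have hε' : 0 < ε' := by positivity
  obtain ⟨m, hm⟩ := (Metric.tendsto_atTop.mp hδ0) ε' hε'
  have hδm : ∀ k, m ≤ k → δ k < ε' := by
    intro k hk
    have := hm k hk
    rwa [Real.dist_eq, sub_zero, abs_of_nonneg (hδ k)] at this
  set C := ∑ k ∈ Icc 1 m, w k * δ k with hC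
  have hnχ : Tendsto (fun n : ℕ => (n : ℝ) ^ (-χ) * C) atTop (𝓝 0) := by
    have h1 : Tendsto (fun n : ℕ => (n : ℝ) ^ (-χ)) atTop (𝓝 0) :=
      (tendsto_rpow_neg_atTop hχ0).comp tendsto_natCast_atTop_atTop
    simpa using h1.mul_const C
  obtain ⟨N, hN⟩ := (Metric.tendsto_atTop.mp hnχ) (ε / 2) (by linarith)
  refine ⟨max N m, fun n hn => ?_⟩
  have hnN : N ≤ n := le_trans (le_max_left _ _) hn
  have hnm : m ≤ n := le_trans (le_max_right _ _) hn
  have hnn : (0 : ℝ) ≤ (n : ℝ) ^ (-χ) := Real.rpow_nonneg (Nat.cast_nonneg n) _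
  have hsplit : ∀ p : ℕ → ℝ, ∑ k ∈ Icc 1 n, p k = ∑ k ∈ Icc 1 m, p k + ∑ k ∈ Ioc m n, p k := by
    intro p
    rw [show (Icc 1 n : Finset ℕ) = Ioc 0 n from (Finset.Icc_add_one_left_eq_Ioc 0 n).symm,
        show (Icc 1 m : Finset ℕ) = Ioc 0 m from (Finset.Icc_add_one_left_eq_Ioc 0 m).symm,
        Finset.sum_Ioc_consecutive _ (Nat.zero_le m) hnm]
  have htail : ∑ k ∈ Ioc m n, w k * δ k ≤ ε' * ∑ k ∈ Icc 1 n, w k := by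
    calc ∑ k ∈ Ioc m n, w k * δ k ≤ ∑ k ∈ Ioc m n, w k * ε' := by
          refine Finset.sum_le_sum fun k hk => ?_
          exact mul_le_mul_of_nonneg_left (le_of_lt (hδm k (le_of_lt (mem_Ioc.mp hk).1))) (hw k)
      _ = ε' * ∑ k ∈ Ioc m n, w k := by rw [← Finset.sum_mul]; ring
      _ ≤ ε' * ∑ k ∈ Icc 1 n, w k := by
          refine mul_le_mul_of_nonneg_left ?_ hε'.le
          refine Finset.sum_le_sum_of_subset_of_nonneg ?_ (fun k _ _ => hw k)
          intro k hk
          simp only [mem_Ioc, mem_Icc] at *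
          omega
  have hε'K : ε' * K ≤ ε / 2 := by
    have : ε' * (K + 1) = ε / 2 := by
      rw [hε'def, div_mul_eq_mul_div, div_eq_iff (by positivity)]
      ring
    nlinarith
  have hval : (0 : ℝ) ≤ (n : ℝ) ^ (-χ) * ∑ k ∈ Icc 1 n, w k * δ k :=
    mul_nonneg hnn (Finset.sum_nonneg fun k _ => mul_nonneg (hw k) (hδ k))
  rw [Real.dist_eq, sub_zero, abs_of_nonneg hval]
  have hhead : (n : ℝ) ^ (-χ) * C < ε / 2 := by
    have := hN n hnN
    rw [Real.dist_eq, sub_zero] at this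
    exact lt_of_le_of_lt (le_abs_self _) this
  have e1 : (n : ℝ) ^ (-χ) * ∑ k ∈ Ioc m n, w k * δ k ≤ ε' * K := by
    calc (n : ℝ) ^ (-χ) * ∑ k ∈ Ioc m n, w k * δ k
        ≤ (n : ℝ) ^ (-χ) * (ε' * ∑ k ∈ Icc 1 n, w k) := mul_le_mul_of_nonneg_left htail hnn
      _ = ε' * ((n : ℝ) ^ (-χ) * ∑ k ∈ Icc 1 n, w k) := by ring
      _ ≤ ε' * K := mul_le_mul_of_nonneg_left (hK n) hε'.le
  calc (n : ℝ) ^ (-χ) * ∑ k ∈ Icc 1 n, w k * δ k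
      = (n : ℝ) ^ (-χ) * C + (n : ℝ) ^ (-χ) * ∑ k ∈ Ioc m n, w k * δ k := by
        rw [hsplit (fun k => w k * δ k)]; ring
    _ < ε / 2 + ε / 2 := by
        have := le_trans e1 hε'K
        linarith
    _ = ε := by ring

/-- Theorem 1(b): converse direction. If `k^{1−χ}|h̄_k − h| → 0` and
`n^{-χ} Σ_{k=1}^n k^{χ−1}‖Ā_k‖` is bounded in `n`, then
`|n^{-χ} Σ_{k=1}^n (b̄_k − Ā_k h)| → 0`. -/
theorem stmt_1 (d : ℕ) (hd : 0 < d) (χ : ℝ) (hχ : χ ∈ Set.Ioo (0 : ℝ) 1)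
    (h : EuclideanSpace ℝ (Fin d))
    (Ab : ℕ → EuclideanSpace ℝ (Fin d) →L[ℝ] EuclideanSpace ℝ (Fin d))
    (hAbsym : ∀ (k : ℕ) (x y : EuclideanSpace ℝ (Fin d)), ⟪Ab k x, y⟫ = ⟪x, Ab k y⟫)
    (hAbpsd : ∀ (k : ℕ) (x : EuclideanSpace ℝ (Fin d)), 0 ≤ ⟪Ab k x, x⟫)
    (bb : ℕ → EuclideanSpace ℝ (Fin d))
    (hb : ℕ → EuclideanSpace ℝ (Fin d))
    (hrec : ∀ k : ℕ, 1 ≤ k → hb (k + 1) = hb k + (k : ℝ) ^ (-χ) • (bb k - Ab k (hb k)))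
    (hconv : Tendsto (fun k : ℕ => (k : ℝ) ^ (1 - χ) * ‖hb k - h‖) atTop (𝓝 0))
    (hbdd : ∃ K : ℝ, ∀ n : ℕ,
      (n : ℝ) ^ (-χ) * ∑ k ∈ Icc 1 n, (k : ℝ) ^ (χ - 1) * ‖Ab k‖ ≤ K) :
    Tendsto (fun n : ℕ => ‖(n : ℝ) ^ (-χ) • ∑ k ∈ Icc 1 n, (bb k - Ab k h)‖)
      atTop (𝓝 0) := by
  obtain ⟨hχ0, hχ1⟩ := hχ
  have hexp : (0 : ℝ) < 1 - χ := by linarith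
  -- ‖hb k - h‖ → 0
  have hgconv : Tendsto (fun k : ℕ => ‖hb k - h‖) atTop (𝓝 0) := by
    refine squeeze_zero' (Eventually.of_forall fun k => norm_nonneg _) ?_ hconv
    filter_upwards [eventually_ge_atTop 1] with k hk
    have h1 : (1 : ℝ) ≤ (k : ℝ) ^ (1 - χ) := by
      have : ((1 : ℕ) : ℝ) ≤ (k : ℝ) := by exact_mod_cast hk
      calc (1 : ℝ) = (k : ℝ) ^ (0 : ℝ) := (Real.rpow_zero _).symm
        _ ≤ (k : ℝ) ^ (1 - χ) := Real.rpow_le_rpow_of_exponent_le (by exact_mod_cast hk) hexp.le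
    exact le_mul_of_one_le_left (norm_nonneg _) h1
  -- nonnegativity of telescoping weights
  have hw0 : ∀ k : ℕ, 0 ≤ (k : ℝ) ^ χ - ((k - 1 : ℕ) : ℝ) ^ χ := by
    intro k
    refine sub_nonneg.mpr (Real.rpow_le_rpow (Nat.cast_nonneg _) ?_ hχ0.le)
    exact_mod_cast Nat.sub_le k 1
  -- telescoping sum
  have hwsum : ∀ n : ℕ, ∑ k ∈ Icc 1 n, ((k : ℝ) ^ χ - ((k - 1 : ℕ) : ℝ) ^ χ) = (n : ℝ) ^ χ := by
    intro n
    have hts := Finset.sum_range_sub (f := fun i : ℕ => ((i : ℕ) : ℝ) ^ χ) (n := n)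
    calc ∑ k ∈ Icc 1 n, ((k : ℝ) ^ χ - ((k - 1 : ℕ) : ℝ) ^ χ)
        = ∑ i ∈ range n, (((i + 1 : ℕ) : ℝ) ^ χ - ((i : ℕ) : ℝ) ^ χ) := by
          rw [show (Icc 1 n : Finset ℕ) = Ico 1 (n + 1) from by
              ext k; simp [Nat.lt_succ_iff], Finset.sum_Ico_eq_sum_range]
          refine Finset.sum_congr (by norm_num) fun i _ => ?_
          rw [Nat.add_comm 1 i, Nat.add_sub_cancel]
      _ = ((n : ℕ) : ℝ) ^ χ - ((0 : ℕ) : ℝ) ^ χ := hts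
      _ = (n : ℝ) ^ χ := by simp [Real.zero_rpow hχ0.ne']
  have hwK : ∀ n : ℕ, (n : ℝ) ^ (-χ) * ∑ k ∈ Icc 1 n, ((k : ℝ) ^ χ - ((k - 1 : ℕ) : ℝ) ^ χ) ≤ 1 := by
    intro n
    rcases Nat.eq_zero_or_pos n with rfl | hn
    · simp [Real.zero_rpow (neg_ne_zero.mpr hχ0.ne')]
    · rw [hwsum n, ← Real.rpow_add (by exact_mod_cast hn), neg_add_cancel, Real.rpow_zero]
  -- key Abel identity
  have key : ∀ n : ℕ, ∑ k ∈ Icc 1 n, (bb k - Ab k h)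
      = (n : ℝ) ^ χ • (hb (n + 1) - h)
        - ∑ k ∈ Icc 1 n, ((k : ℝ) ^ χ - ((k - 1 : ℕ) : ℝ) ^ χ) • (hb k - h)
        + ∑ k ∈ Icc 1 n, Ab k (hb k - h) := by
    intro n
    induction n with
    | zero => simp [Real.zero_rpow hχ0.ne']
    | succ n ih =>
      have hn1 : 1 ≤ n + 1 := Nat.succ_le_succ (Nat.zero_le n)
      have hpos : (0 : ℝ) < ((n + 1 : ℕ) : ℝ) := by positivity
      have hstep : ((n + 1 : ℕ) : ℝ) ^ χ • (hb (n + 1 + 1) - hb (n + 1))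
          = bb (n + 1) - Ab (n + 1) (hb (n + 1)) := by
        rw [hrec (n + 1) hn1, add_sub_cancel_left, smul_smul, ← Real.rpow_add hpos,
          add_neg_cancel, Real.rpow_zero, one_smul]
      have hterm : bb (n + 1) - Ab (n + 1) h
          = ((n + 1 : ℕ) : ℝ) ^ χ • (hb (n + 1 + 1) - h)
            - ((n : ℕ) : ℝ) ^ χ • (hb (n + 1) - h)
            - (((n + 1 : ℕ) : ℝ) ^ χ - ((n : ℕ) : ℝ) ^ χ) • (hb (n + 1) - h)
            + Ab (n + 1) (hb (n + 1) - h) := by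
        have hsplit2 : bb (n + 1) - Ab (n + 1) h
            = (bb (n + 1) - Ab (n + 1) (hb (n + 1))) + (Ab (n + 1) (hb (n + 1)) - Ab (n + 1) h) := by
          abel
        rw [hsplit2, ← hstep, ← map_sub]
        module
      rw [Finset.sum_Icc_succ_top hn1, Finset.sum_Icc_succ_top hn1, Finset.sum_Icc_succ_top hn1,
        ih, hterm]
      simp only [Nat.add_sub_cancel]
      abel
  -- limits of the three bounding terms
  have t1 : Tendsto (fun n : ℕ => ‖hb (n + 1) - h‖) atTop (𝓝 0) :=
    hgconv.comp (tendsto_add_atTop_nat 1)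
  have t2 := aux_tendsto χ hχ0 (fun k => (k : ℝ) ^ χ - ((k - 1 : ℕ) : ℝ) ^ χ)
    (fun k => ‖hb k - h‖) hw0 (fun k => norm_nonneg _) hgconv 1 hwK
  obtain ⟨K, hK⟩ := hbdd
  have t3 := aux_tendsto χ hχ0 (fun k => (k : ℝ) ^ (χ - 1) * ‖Ab k‖)
    (fun k => (k : ℝ) ^ (1 - χ) * ‖hb k - h‖) (fun k => mul_nonneg (Real.rpow_nonneg (Nat.cast_nonneg _) _) (norm_nonneg _))
    (fun k => mul_nonneg (Real.rpow_nonneg (Nat.cast_nonneg _) _) (norm_nonneg _))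
    hconv K hK
  refine squeeze_zero'
    (g := fun n : ℕ => ‖hb (n + 1) - h‖
      + (n : ℝ) ^ (-χ) * ∑ k ∈ Icc 1 n, ((k : ℝ) ^ χ - ((k - 1 : ℕ) : ℝ) ^ χ) * ‖hb k - h‖
      + (n : ℝ) ^ (-χ) * ∑ k ∈ Icc 1 n, ((k : ℝ) ^ (χ - 1) * ‖Ab k‖) * ((k : ℝ) ^ (1 - χ) * ‖hb k - h‖))
    (Eventually.of_forall fun n => norm_nonneg _) ?_ (by simpa only [add_zero] using (t1.add t2).add t3)
  filter_upwards [eventually_ge_atTop 1] with n hn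
  have hnpos : (0 : ℝ) < (n : ℝ) := by exact_mod_cast hn
  have hnn : (0 : ℝ) ≤ (n : ℝ) ^ (-χ) := Real.rpow_nonneg hnpos.le _
  have hbound : ‖∑ k ∈ Icc 1 n, (bb k - Ab k h)‖
      ≤ (n : ℝ) ^ χ * ‖hb (n + 1) - h‖
        + ∑ k ∈ Icc 1 n, ((k : ℝ) ^ χ - ((k - 1 : ℕ) : ℝ) ^ χ) * ‖hb k - h‖
        + ∑ k ∈ Icc 1 n, ((k : ℝ) ^ (χ - 1) * ‖Ab k‖) * ((k : ℝ) ^ (1 - χ) * ‖hb k - h‖) := by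
    rw [key n]
    refine le_trans (norm_add_le _ _) (add_le_add (le_trans (norm_sub_le _ _)
      (add_le_add ?_ ?_)) ?_)
    · rw [norm_smul, Real.norm_eq_abs, abs_of_nonneg (Real.rpow_nonneg hnpos.le _)]
    · refine le_trans (norm_sum_le _ _) (Finset.sum_le_sum fun k _ => ?_)
      rw [norm_smul, Real.norm_eq_abs, abs_of_nonneg (hw0 k)]
    · refine le_trans (norm_sum_le _ _) (Finset.sum_le_sum fun k hk => ?_)
      have hk1 : 1 ≤ k := (mem_Icc.mp hk).1
      have hkpos : (0 : ℝ) < (k : ℝ) := by exact_mod_cast hk1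
      have e1 : (k : ℝ) ^ (χ - 1) * (k : ℝ) ^ (1 - χ) = 1 := by
        rw [← Real.rpow_add hkpos]; norm_num
      calc ‖Ab k (hb k - h)‖ ≤ ‖Ab k‖ * ‖hb k - h‖ := (Ab k).le_opNorm _
        _ = ((k : ℝ) ^ (χ - 1) * ‖Ab k‖) * ((k : ℝ) ^ (1 - χ) * ‖hb k - h‖) := by
            rw [mul_mul_mul_comm, e1, one_mul]
  have hone : (n : ℝ) ^ (-χ) * ((n : ℝ) ^ χ * ‖hb (n + 1) - h‖) = ‖hb (n + 1) - h‖ := by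
    rw [← mul_assoc, ← Real.rpow_add hnpos, neg_add_cancel, Real.rpow_zero, one_mul]
  calc ‖(n : ℝ) ^ (-χ) • ∑ k ∈ Icc 1 n, (bb k - Ab k h)‖
      = (n : ℝ) ^ (-χ) * ‖∑ k ∈ Icc 1 n, (bb k - Ab k h)‖ := by
        rw [norm_smul, Real.norm_eq_abs, abs_of_nonneg hnn]
    _ ≤ (n : ℝ) ^ (-χ) * ((n : ℝ) ^ χ * ‖hb (n + 1) - h‖
        + ∑ k ∈ Icc 1 n, ((k : ℝ) ^ χ - ((k - 1 : ℕ) : ℝ) ^ χ) * ‖hb k - h‖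
        + ∑ k ∈ Icc 1 n, ((k : ℝ) ^ (χ - 1) * ‖Ab k‖) * ((k : ℝ) ^ (1 - χ) * ‖hb k - h‖)) :=
        mul_le_mul_of_nonneg_left hbound hnn
    _ = _ := by rw [mul_add, mul_add, hone]
end

section
/- Let χ ∈ (0,1), d a positive integer, A a symmetric positive-definite real d×d matrix and {Ā_k} a sequence of symmetric positive-semidefinite d×d matrices. If ‖n^{-χ} Σ_{k=1}^n (Ā_k − A)‖ → 0 as n → ∞, then the sequence n^{-χ} Σ_{k=1}^n k^{χ−1}‖Ā_k‖ is bounded in n. -/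
open Filter Finset
open scoped RealInnerProductSpace Topology

-- PSD off-diagonal bound
lemma psd_abs_inner_le {E : Type*} [NormedAddCommGroup E] [InnerProductSpace ℝ E]
    (B : E →L[ℝ] E) (hsym : ∀ x y : E, ⟪B x, y⟫ = ⟪x, B y⟫) (hpsd : ∀ x : E, 0 ≤ ⟪B x, x⟫)
    (u v : E) : |⟪B u, v⟫| ≤ (⟪B u, u⟫ + ⟪B v, v⟫) / 2 := by
  have hvu : ⟪B v, u⟫ = ⟪B u, v⟫ := by
    rw [hsym v u, real_inner_comm]
  have h1 := hpsd (u + v)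
  have h2 := hpsd (u - v)
  have e1 : ⟪B (u + v), u + v⟫ = ⟪B u, u⟫ + ⟪B u, v⟫ + (⟪B v, u⟫ + ⟪B v, v⟫) := by
    simp [inner_add_add_self, map_add, inner_add_left, inner_add_right]
    ring
  have e2 : ⟪B (u - v), u - v⟫ = ⟪B u, u⟫ - ⟪B u, v⟫ - (⟪B v, u⟫ - ⟪B v, v⟫) := by
    simp [map_sub, inner_sub_left, inner_sub_right]
    ring
  rw [e1, hvu] at h1
  rw [e2, hvu] at h2
  rw [abs_le]
  constructor <;> nlinarith

lemma norm_le_sum_abs_inner {E : Type*} [NormedAddCommGroup E] [InnerProductSpace ℝ E]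
    {ι : Type*} [Fintype ι] (b : OrthonormalBasis ι ℝ E) (v : E) :
    ‖v‖ ≤ ∑ i, |⟪b i, v⟫| := by
  conv_lhs => rw [← b.sum_repr v]
  refine (norm_sum_le _ _).trans ?_
  refine Finset.sum_le_sum fun i _ => ?_
  rw [norm_smul, b.orthonormal.1 i, mul_one]
  simp [b.repr_apply_apply]

lemma opNorm_le_sum_entries {E : Type*} [NormedAddCommGroup E] [InnerProductSpace ℝ E]
    {ι : Type*} [Fintype ι] (b : OrthonormalBasis ι ℝ E) (B : E →L[ℝ] E) :
    ‖B‖ ≤ ∑ j, ∑ i, |⟪B (b j), b i⟫| := by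
  refine ContinuousLinearMap.opNorm_le_bound _ ?_ fun x => ?_
  · positivity
  · calc ‖B x‖ = ‖∑ j, b.repr x j • B (b j)‖ := by
          conv_lhs => rw [← b.sum_repr x]
          rw [map_sum]
          simp only [map_smul]
      _ ≤ ∑ j, ‖b.repr x j • B (b j)‖ := norm_sum_le _ _
      _ ≤ ∑ j, (∑ i, |⟪B (b j), b i⟫|) * ‖x‖ := by
          refine Finset.sum_le_sum fun j _ => ?_
          rw [norm_smul]
          have h1 : ‖b.repr x j‖ ≤ ‖x‖ := by
            rw [b.repr_apply_apply, Real.norm_eq_abs]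
            exact (abs_real_inner_le_norm _ _).trans (by rw [b.orthonormal.1 j, one_mul])
          have h2 : ‖B (b j)‖ ≤ ∑ i, |⟪B (b j), b i⟫| := by
            refine (norm_le_sum_abs_inner b _).trans ?_
            exact Finset.sum_le_sum fun i _ => by rw [real_inner_comm]
          calc ‖b.repr x j‖ * ‖B (b j)‖ ≤ ‖x‖ * ∑ i, |⟪B (b j), b i⟫| := by
                apply mul_le_mul h1 h2 (norm_nonneg _) (norm_nonneg _)
            _ = (∑ i, |⟪B (b j), b i⟫|) * ‖x‖ := by ring
      _ = (∑ j, ∑ i, |⟪B (b j), b i⟫|) * ‖x‖ := by rw [Finset.sum_mul]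

lemma opNorm_le_card_mul_trace {E : Type*} [NormedAddCommGroup E] [InnerProductSpace ℝ E]
    {ι : Type*} [Fintype ι] (b : OrthonormalBasis ι ℝ E) (B : E →L[ℝ] E)
    (hsym : ∀ x y : E, ⟪B x, y⟫ = ⟪x, B y⟫) (hpsd : ∀ x : E, 0 ≤ ⟪B x, x⟫) :
    ‖B‖ ≤ (Fintype.card ι : ℝ) * ∑ i, ⟪B (b i), b i⟫ := by
  refine (opNorm_le_sum_entries b B).trans ?_
  calc ∑ j, ∑ i, |⟪B (b j), b i⟫|
      ≤ ∑ j, ∑ i, (⟪B (b j), b j⟫ + ⟪B (b i), b i⟫) / 2 := by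
        refine Finset.sum_le_sum fun j _ => Finset.sum_le_sum fun i _ => ?_
        exact psd_abs_inner_le B hsym hpsd _ _
    _ = (Fintype.card ι : ℝ) * ∑ i, ⟪B (b i), b i⟫ := by
        have h : ∀ j : ι, ∑ i, (⟪B (b j), b j⟫ + ⟪B (b i), b i⟫) / 2
            = ((Fintype.card ι : ℝ) * ⟪B (b j), b j⟫ + ∑ i, ⟪B (b i), b i⟫) / 2 := by
          intro j
          rw [← Finset.sum_div, Finset.sum_add_distrib, Finset.sum_const, Finset.card_univ,
            nsmul_eq_mul]
        simp only [h]
        rw [← Finset.sum_div, Finset.sum_add_distrib, ← Finset.mul_sum, Finset.sum_const,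
          Finset.card_univ, nsmul_eq_mul]
        ring

lemma trace_le_card_mul_opNorm {E : Type*} [NormedAddCommGroup E] [InnerProductSpace ℝ E]
    {ι : Type*} [Fintype ι] (b : OrthonormalBasis ι ℝ E) (B : E →L[ℝ] E) :
    ∑ i, ⟪B (b i), b i⟫ ≤ (Fintype.card ι : ℝ) * ‖B‖ := by
  calc ∑ i, ⟪B (b i), b i⟫ ≤ ∑ i : ι, ‖B‖ := by
        refine Finset.sum_le_sum fun i _ => ?_
        refine (real_inner_le_norm _ _).trans ?_
        have := b.orthonormal.1 i
        calc ‖B (b i)‖ * ‖b i‖ = ‖B (b i)‖ := by rw [this, mul_one]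
          _ ≤ ‖B‖ * ‖b i‖ := B.le_opNorm _
          _ = ‖B‖ := by rw [this, mul_one]
    _ = (Fintype.card ι : ℝ) * ‖B‖ := by
        rw [Finset.sum_const, Finset.card_univ, nsmul_eq_mul]

lemma bern_step {χ : ℝ} (hχ0 : 0 < χ) (hχ1 : χ < 1) {m : ℝ} (hm : 1 ≤ m) :
    χ * m ^ (χ - 1) ≤ m ^ χ - (m - 1) ^ χ := by
  have hm0 : 0 < m := lt_of_lt_of_le one_pos hm
  have hs : (-1 : ℝ) ≤ -1 / m := by
    rw [neg_div, neg_le_neg_iff]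
    exact (div_le_one hm0).mpr hm
  have h := rpow_one_add_le_one_add_mul_self hs hχ0.le hχ1.le
  have he : (1 : ℝ) + -1 / m = (m - 1) / m := by field_simp; ring
  rw [he] at h
  have hmul : (m - 1) ^ χ = ((m - 1) / m) ^ χ * m ^ χ := by
    rw [← Real.mul_rpow (div_nonneg (by linarith) hm0.le) hm0.le, div_mul_cancel₀ _ hm0.ne']
  have hmχ : (0 : ℝ) < m ^ χ := Real.rpow_pos_of_pos hm0 _
  have hpow : m ^ (χ - 1) = m ^ χ / m := Real.rpow_sub_one hm0.ne' _
  calc χ * m ^ (χ - 1) = m ^ χ - (1 + χ * (-1 / m)) * m ^ χ := by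
        rw [hpow]; field_simp; ring
    _ ≤ m ^ χ - (m - 1) ^ χ := by
        rw [hmul]
        have := mul_le_mul_of_nonneg_right h hmχ.le
        linarith

lemma sum_rpow_le {χ : ℝ} (hχ0 : 0 < χ) (hχ1 : χ < 1) (n : ℕ) :
    ∑ k ∈ Icc 1 n, (k : ℝ) ^ (χ - 1) ≤ (n : ℝ) ^ χ / χ := by
  induction n with
  | zero => simp [Real.zero_rpow hχ0.ne']
  | succ n ih =>
    rw [Finset.sum_Icc_succ_top (Nat.one_le_iff_ne_zero.mpr (Nat.succ_ne_zero n))]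
    have hb := bern_step hχ0 hχ1 (m := (n + 1 : ℝ)) (by have : (0:ℝ) ≤ n := Nat.cast_nonneg n; linarith)
    have he : ((n : ℝ) + 1) - 1 = (n : ℝ) := by ring
    rw [he] at hb
    have : ((n + 1 : ℕ) : ℝ) = (n : ℝ) + 1 := by push_cast; ring
    rw [this]
    have h2 : ((n : ℝ) + 1) ^ (χ - 1) ≤ (((n : ℝ) + 1) ^ χ - (n : ℝ) ^ χ) / χ := by
      rw [le_div_iff₀ hχ0]
      linarith
    calc ∑ k ∈ Icc 1 n, (k : ℝ) ^ (χ - 1) + ((n : ℝ) + 1) ^ (χ - 1)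
        ≤ (n : ℝ) ^ χ / χ + (((n : ℝ) + 1) ^ χ - (n : ℝ) ^ χ) / χ := add_le_add ih h2
      _ = ((n : ℝ) + 1) ^ χ / χ := by ring

lemma abel_bound {χ : ℝ} (hχ0 : 0 < χ) (hχ1 : χ < 1) (g : ℕ → ℝ) (hg : ∀ k, 0 ≤ g k)
    (C : ℝ) (hC : 0 ≤ C) (hT : ∀ m : ℕ, ∑ k ∈ Icc 1 m, g k ≤ C * m) (n : ℕ) :
    ∑ k ∈ Icc 1 n, (k : ℝ) ^ (χ - 1) * g k
      ≤ (n : ℝ) ^ (χ - 1) * (∑ k ∈ Icc 1 n, g k)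
        + C * ((∑ k ∈ Icc 1 n, (k : ℝ) ^ (χ - 1)) + 1 - (n : ℝ) ^ χ) := by
  induction n with
  | zero => simp [Real.zero_rpow hχ0.ne', hC]
  | succ n ih =>
    have h1n : 1 ≤ n + 1 := Nat.le_add_left 1 n
    rw [Finset.sum_Icc_succ_top h1n, Finset.sum_Icc_succ_top h1n, Finset.sum_Icc_succ_top h1n]
    have hcast : ((n + 1 : ℕ) : ℝ) = (n : ℝ) + 1 := by push_cast; ring
    rw [hcast]
    set m : ℝ := (n : ℝ) + 1 with hm
    have hm1 : (1 : ℝ) ≤ m := by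
      have h0 : (0:ℝ) ≤ n := Nat.cast_nonneg n
      rw [hm]; linarith
    have hm0 : (0 : ℝ) < m := lt_of_lt_of_le one_pos hm1
    have hmm : m * m ^ (χ - 1) = m ^ χ := by
      rw [Real.rpow_sub_one hm0.ne' χ]; field_simp
    have key : (n : ℝ) ^ (χ - 1) * (∑ k ∈ Icc 1 n, g k)
        ≤ m ^ (χ - 1) * (∑ k ∈ Icc 1 n, g k) + C * (m ^ (χ - 1) - m ^ χ + (n : ℝ) ^ χ) := by
      rcases Nat.eq_zero_or_pos n with rfl | hn
      · simp [Real.zero_rpow hχ0.ne', hm]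
      · have hn0 : (0 : ℝ) < n := by exact_mod_cast hn
        have hδ : m ^ (χ - 1) ≤ (n : ℝ) ^ (χ - 1) :=
          Real.rpow_le_rpow_of_nonpos hn0 (by simp [hm]) (by linarith)
        have hTn := hT n
        have hTnn : 0 ≤ ∑ k ∈ Icc 1 n, g k := Finset.sum_nonneg fun k _ => hg k
        have hnn : (n : ℝ) * (n : ℝ) ^ (χ - 1) = (n : ℝ) ^ χ := by
          rw [Real.rpow_sub_one hn0.ne' χ]; field_simp
        have hnm : (n : ℝ) * m ^ (χ - 1) = m ^ χ - m ^ (χ - 1) := by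
          have : (n : ℝ) = m - 1 := by simp [hm]
          rw [this, sub_mul, one_mul, hmm]
        nlinarith [mul_le_mul_of_nonneg_right hTn (sub_nonneg.mpr hδ),
          mul_le_mul_of_nonneg_left (sub_nonneg.mpr hδ) hTnn]
    have hgn : 0 ≤ g (n + 1) := hg (n + 1)
    linarith [ih]

/-- Lemma 1: if `‖n^{-χ} Σ_{k=1}^n (Ā_k − A)‖ → 0`, then
`n^{-χ} Σ_{k=1}^n k^{χ−1}‖Ā_k‖` is bounded in `n`. -/
theorem stmt_2 (d : ℕ) (hd : 0 < d) (χ : ℝ) (hχ : χ ∈ Set.Ioo (0 : ℝ) 1)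
    (A : EuclideanSpace ℝ (Fin d) →L[ℝ] EuclideanSpace ℝ (Fin d))
    (hAsym : ∀ x y : EuclideanSpace ℝ (Fin d), ⟪A x, y⟫ = ⟪x, A y⟫)
    (hApos : ∀ x : EuclideanSpace ℝ (Fin d), x ≠ 0 → 0 < ⟪A x, x⟫)
    (Ab : ℕ → EuclideanSpace ℝ (Fin d) →L[ℝ] EuclideanSpace ℝ (Fin d))
    (hAbsym : ∀ (k : ℕ) (x y : EuclideanSpace ℝ (Fin d)), ⟪Ab k x, y⟫ = ⟪x, Ab k y⟫)
    (hAbpsd : ∀ (k : ℕ) (x : EuclideanSpace ℝ (Fin d)), 0 ≤ ⟪Ab k x, x⟫)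
    (hcoefA : Tendsto (fun n : ℕ => ‖(n : ℝ) ^ (-χ) • ∑ k ∈ Icc 1 n, (Ab k - A)‖)
      atTop (𝓝 0)) :
    ∃ K : ℝ, ∀ n : ℕ,
      (n : ℝ) ^ (-χ) * ∑ k ∈ Icc 1 n, (k : ℝ) ^ (χ - 1) * ‖Ab k‖ ≤ K := by
  obtain ⟨hχ0, hχ1⟩ := hχ
  -- bound on the normalized deviation
  obtain ⟨M, hM⟩ := hcoefA.bddAbove_range
  have hM' : ∀ n : ℕ, ‖(n : ℝ) ^ (-χ) • ∑ k ∈ Icc 1 n, (Ab k - A)‖ ≤ M := fun n =>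
    hM (Set.mem_range_self n)
  have hM0 : 0 ≤ M := le_trans (norm_nonneg _) (hM' 0)
  -- bound on partial sums of Ab
  have hS : ∀ m : ℕ, ‖∑ k ∈ Icc 1 m, Ab k‖ ≤ (‖A‖ + M) * m := by
    intro m
    rcases Nat.eq_zero_or_pos m with rfl | hm
    · rw [Finset.Icc_eq_empty (by norm_num), Finset.sum_empty, norm_zero, Nat.cast_zero, mul_zero]
    have hm0 : (0 : ℝ) < m := by exact_mod_cast hm
    have hm1 : (1 : ℝ) ≤ m := by exact_mod_cast hm
    have hconst : (∑ k ∈ Icc 1 m, A) = (m : ℝ) • A := by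
      rw [Finset.sum_const, Nat.card_Icc, Nat.add_sub_cancel, ← Nat.cast_smul_eq_nsmul ℝ]
    have hsplit : (∑ k ∈ Icc 1 m, Ab k)
        = (∑ k ∈ Icc 1 m, (Ab k - A)) + (m : ℝ) • A := by
      rw [Finset.sum_sub_distrib, hconst, sub_add_cancel]
    have hdev : ‖∑ k ∈ Icc 1 m, (Ab k - A)‖ ≤ M * (m : ℝ) ^ χ := by
      have h1 := hM' m
      have h2 : (0 : ℝ) < (m : ℝ) ^ (-χ) := Real.rpow_pos_of_pos hm0 _
      have hns := norm_smul ((m : ℝ) ^ (-χ)) (∑ k ∈ Icc 1 m, (Ab k - A))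
      rw [hns, Real.norm_eq_abs, abs_of_pos h2] at h1
      have h3 : (m : ℝ) ^ (-χ) * (m : ℝ) ^ χ = 1 := by
        rw [← Real.rpow_add hm0]; simp
      calc ‖∑ k ∈ Icc 1 m, (Ab k - A)‖
          = ((m : ℝ) ^ (-χ) * ‖∑ k ∈ Icc 1 m, (Ab k - A)‖) * (m : ℝ) ^ χ := by
            rw [mul_comm ((m : ℝ) ^ (-χ)) _, mul_assoc, h3, mul_one]
        _ ≤ M * (m : ℝ) ^ χ :=
            mul_le_mul_of_nonneg_right h1 (Real.rpow_pos_of_pos hm0 _).le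
    have hmχ : (m : ℝ) ^ χ ≤ (m : ℝ) := by
      calc (m : ℝ) ^ χ ≤ (m : ℝ) ^ (1 : ℝ) :=
            Real.rpow_le_rpow_of_exponent_le hm1 hχ1.le
        _ = m := Real.rpow_one _
    calc ‖∑ k ∈ Icc 1 m, Ab k‖
        ≤ ‖∑ k ∈ Icc 1 m, (Ab k - A)‖ + ‖(m : ℝ) • A‖ := by
          rw [hsplit]; exact norm_add_le _ _
      _ ≤ M * (m : ℝ) ^ χ + (m : ℝ) * ‖A‖ := by
          have hns := norm_smul (m : ℝ) A
          rw [hns, Real.norm_eq_abs, abs_of_pos hm0]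
          linarith [hdev]
      _ ≤ M * m + m * ‖A‖ := by
          have h5 := mul_le_mul_of_nonneg_left hmχ hM0
          linarith
      _ = (‖A‖ + M) * m := by ring
  -- trace bound
  set b := EuclideanSpace.basisFun (Fin d) ℝ with hb
  have hcard : (Fintype.card (Fin d) : ℝ) = d := by simp
  set C : ℝ := (d : ℝ) ^ 2 * (‖A‖ + M) with hCdef
  have hAM : 0 ≤ ‖A‖ + M := by positivity
  have hC0 : 0 ≤ C := by positivity
  have hT : ∀ m : ℕ, ∑ k ∈ Icc 1 m, ‖Ab k‖ ≤ C * m := by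
    intro m
    have h1 : ∀ k, ‖Ab k‖ ≤ (d : ℝ) * ∑ i, ⟪Ab k (b i), b i⟫ := by
      intro k
      have := opNorm_le_card_mul_trace b (Ab k) (hAbsym k) (hAbpsd k)
      rwa [hcard] at this
    have h2 : ∑ k ∈ Icc 1 m, ∑ i, ⟪Ab k (b i), b i⟫
        = ∑ i, ⟪(∑ k ∈ Icc 1 m, Ab k) (b i), b i⟫ := by
      rw [Finset.sum_comm]
      refine Finset.sum_congr rfl fun i _ => ?_
      rw [ContinuousLinearMap.sum_apply, sum_inner]
    have h3 : ∑ i, ⟪(∑ k ∈ Icc 1 m, Ab k) (b i), b i⟫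
        ≤ (d : ℝ) * ‖∑ k ∈ Icc 1 m, Ab k‖ := by
      have := trace_le_card_mul_opNorm b (∑ k ∈ Icc 1 m, Ab k)
      rwa [hcard] at this
    calc ∑ k ∈ Icc 1 m, ‖Ab k‖
        ≤ ∑ k ∈ Icc 1 m, (d : ℝ) * ∑ i, ⟪Ab k (b i), b i⟫ :=
          Finset.sum_le_sum fun k _ => h1 k
      _ = (d : ℝ) * ∑ i, ⟪(∑ k ∈ Icc 1 m, Ab k) (b i), b i⟫ := by
          rw [← Finset.mul_sum, h2]
      _ ≤ (d : ℝ) * ((d : ℝ) * ‖∑ k ∈ Icc 1 m, Ab k‖) :=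
          mul_le_mul_of_nonneg_left h3 (Nat.cast_nonneg d)
      _ ≤ (d : ℝ) * ((d : ℝ) * ((‖A‖ + M) * m)) := by
          refine mul_le_mul_of_nonneg_left ?_ (Nat.cast_nonneg d)
          exact mul_le_mul_of_nonneg_left (hS m) (Nat.cast_nonneg d)
      _ = C * m := by rw [hCdef]; ring
  -- conclude via Abel
  refine ⟨C / χ + C, fun n => ?_⟩
  rcases Nat.eq_zero_or_pos n with rfl | hn
  · rw [Finset.Icc_eq_empty (by norm_num), Finset.sum_empty, mul_zero]
    positivity
  have hn0 : (0 : ℝ) < n := by exact_mod_cast hn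
  have hn1 : (1 : ℝ) ≤ n := by exact_mod_cast hn
  have habel := abel_bound hχ0 hχ1 (fun k => ‖Ab k‖) (fun k => norm_nonneg _) C hC0 hT n
  have hsum := sum_rpow_le hχ0 hχ1 n
  have hTn := hT n
  have hpos1 : (0 : ℝ) ≤ (n : ℝ) ^ (χ - 1) := (Real.rpow_pos_of_pos hn0 _).le
  have hpownn : (n : ℝ) ^ (χ - 1) * (n : ℝ) = (n : ℝ) ^ χ := by
    rw [Real.rpow_sub_one hn0.ne' χ]; field_simp
  have hstep : ∑ k ∈ Icc 1 n, (k : ℝ) ^ (χ - 1) * ‖Ab k‖ ≤ C * ((n : ℝ) ^ χ / χ + 1) := by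
    have hb1 : (n : ℝ) ^ (χ - 1) * (∑ k ∈ Icc 1 n, ‖Ab k‖) ≤ (n : ℝ) ^ χ * C := by
      calc (n : ℝ) ^ (χ - 1) * (∑ k ∈ Icc 1 n, ‖Ab k‖)
          ≤ (n : ℝ) ^ (χ - 1) * (C * n) := mul_le_mul_of_nonneg_left hTn hpos1
        _ = (n : ℝ) ^ χ * C := by rw [← hpownn]; ring
    have hb2 : C * ((∑ k ∈ Icc 1 n, (k : ℝ) ^ (χ - 1)) + 1 - (n : ℝ) ^ χ)
        ≤ C * ((n : ℝ) ^ χ / χ + 1 - (n : ℝ) ^ χ) := by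
      refine mul_le_mul_of_nonneg_left ?_ hC0
      linarith
    calc ∑ k ∈ Icc 1 n, (k : ℝ) ^ (χ - 1) * ‖Ab k‖
        ≤ (n : ℝ) ^ (χ - 1) * (∑ k ∈ Icc 1 n, ‖Ab k‖)
          + C * ((∑ k ∈ Icc 1 n, (k : ℝ) ^ (χ - 1)) + 1 - (n : ℝ) ^ χ) := habel
      _ ≤ (n : ℝ) ^ χ * C + C * ((n : ℝ) ^ χ / χ + 1 - (n : ℝ) ^ χ) := add_le_add hb1 hb2
      _ = C * ((n : ℝ) ^ χ / χ + 1) := by ring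
  have hneg : (0 : ℝ) < (n : ℝ) ^ (-χ) := Real.rpow_pos_of_pos hn0 _
  have hinv : (n : ℝ) ^ (-χ) * (n : ℝ) ^ χ = 1 := by
    rw [← Real.rpow_add hn0]; simp
  have hle1 : (n : ℝ) ^ (-χ) ≤ 1 :=
    Real.rpow_le_one_of_one_le_of_nonpos hn1 (by linarith)
  calc (n : ℝ) ^ (-χ) * ∑ k ∈ Icc 1 n, (k : ℝ) ^ (χ - 1) * ‖Ab k‖
      ≤ (n : ℝ) ^ (-χ) * (C * ((n : ℝ) ^ χ / χ + 1)) :=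
        mul_le_mul_of_nonneg_left hstep hneg.le
    _ = C / χ * ((n : ℝ) ^ (-χ) * (n : ℝ) ^ χ) + C * (n : ℝ) ^ (-χ) := by ring
    _ = C / χ + C * (n : ℝ) ^ (-χ) := by rw [hinv]; ring
    _ ≤ C / χ + C := by nlinarith
end

section
/- Let χ ∈ (0,1), θ ∈ (χ,1], η̄ > 0, and {η_l} real numbers with 0 ≤ η_l ≤ η̄ l^{-θ}. Let A be a symmetric positive-definite real d×d matrix. Then ‖∏_{l=1}^{n−1} (I − l^{-χ}A + η_l I)‖ → 0 as n → ∞, where the product is taken in decreasing order of index (∏_{l=p}^{q} B_l = B_q B_{q−1} ⋯ B_p). -/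
open Filter Finset
open scoped RealInnerProductSpace Topology

/-- `prodDesc B p q = B_q * B_{q-1} * ⋯ * B_p` (decreasing order of index);
an empty product (`p > q`) is the identity. -/
noncomputable def prodDesc {d : ℕ}
    (B : ℕ → EuclideanSpace ℝ (Fin d) →L[ℝ] EuclideanSpace ℝ (Fin d)) (p q : ℕ) :
    EuclideanSpace ℝ (Fin d) →L[ℝ] EuclideanSpace ℝ (Fin d) :=
  ((List.range (q + 1 - p)).map fun i => B (q - i)).prod

lemma prodDesc_one_succ {d : ℕ}
    (B : ℕ → EuclideanSpace ℝ (Fin d) →L[ℝ] EuclideanSpace ℝ (Fin d)) (q : ℕ) :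
    prodDesc B 1 (q + 1) = B (q + 1) * prodDesc B 1 q := by
  simp only [prodDesc, Nat.add_sub_cancel]
  rw [List.range_succ_eq_map]
  rw [List.map_cons, List.prod_cons, Nat.sub_zero, List.map_map]
  congr 2
  refine List.map_congr_left fun i _ => ?_
  simp [Function.comp, Nat.succ_sub_succ]

lemma norm_prodDesc_one_le {d : ℕ}
    (B : ℕ → EuclideanSpace ℝ (Fin d) →L[ℝ] EuclideanSpace ℝ (Fin d)) (q : ℕ) :
    ‖prodDesc B 1 q‖ ≤ ∏ i ∈ Finset.range q, ‖B (i + 1)‖ := by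
  induction q with
  | zero =>
      simp only [prodDesc, Nat.zero_add, Nat.sub_self, List.range_zero, List.map_nil,
        List.prod_nil, Finset.range_zero, Finset.prod_empty]
      exact (ContinuousLinearMap.norm_id_le (E := EuclideanSpace ℝ (Fin d)))
  | succ q ih =>
      rw [prodDesc_one_succ, Finset.prod_range_succ]
      calc ‖B (q + 1) * prodDesc B 1 q‖ ≤ ‖B (q + 1)‖ * ‖prodDesc B 1 q‖ := norm_mul_le _ _
        _ ≤ ‖B (q + 1)‖ * ∏ i ∈ Finset.range q, ‖B (i + 1)‖ :=
            mul_le_mul_of_nonneg_left ih (norm_nonneg _)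
        _ = (∏ i ∈ Finset.range q, ‖B (i + 1)‖) * ‖B (q + 1)‖ := mul_comm _ _

set_option maxHeartbeats 1000000 in
/-- Lemma 2 i): `‖∏_{l=1}^{n−1} (I − l^{-χ}A + η_l I)‖ → 0` as `n → ∞`. -/
theorem stmt_6 (d : ℕ) (hd : 0 < d) (χ θ η' : ℝ) (hχ : χ ∈ Set.Ioo (0 : ℝ) 1)
    (hθ : θ ∈ Set.Ioc χ 1) (hη' : 0 < η')
    (η : ℕ → ℝ) (hη : ∀ l : ℕ, 1 ≤ l → 0 ≤ η l ∧ η l ≤ η' * (l : ℝ) ^ (-θ))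
    (A : EuclideanSpace ℝ (Fin d) →L[ℝ] EuclideanSpace ℝ (Fin d))
    (hAsym : ∀ x y : EuclideanSpace ℝ (Fin d), ⟪A x, y⟫ = ⟪x, A y⟫)
    (hApos : ∀ x : EuclideanSpace ℝ (Fin d), x ≠ 0 → 0 < ⟪A x, x⟫) :
    Tendsto (fun n : ℕ =>
        ‖prodDesc (fun l => 1 - (l : ℝ) ^ (-χ) • A + η l • 1) 1 (n - 1)‖)
      atTop (𝓝 0) := by
  obtain ⟨hχ0, hχ1⟩ := hχ
  obtain ⟨hθχ, hθ1⟩ := hθ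
  haveI : Nontrivial (EuclideanSpace ℝ (Fin d)) := by
    refine ⟨EuclideanSpace.single ⟨0, hd⟩ (1 : ℝ), 0, fun h => ?_⟩
    have h2 : ‖EuclideanSpace.single (⟨0, hd⟩ : Fin d) (1 : ℝ)‖ = 0 := by
      rw [h, norm_zero]
    rw [EuclideanSpace.norm_single] at h2
    norm_num at h2
  -- minimum of the quadratic form on the unit sphere
  have hcont : Continuous fun x : EuclideanSpace ℝ (Fin d) => ⟪A x, x⟫ := A.continuous.inner continuous_id
  obtain ⟨x₀, hx₀mem, hmin⟩ := (isCompact_sphere (0 : EuclideanSpace ℝ (Fin d)) 1).exists_isMinOn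
    (NormedSpace.sphere_nonempty.2 zero_le_one) hcont.continuousOn
  have hx₀norm : ‖x₀‖ = 1 := by simpa using hx₀mem
  have hx₀ne : x₀ ≠ 0 := by
    intro h; rw [h, norm_zero] at hx₀norm; exact one_ne_zero hx₀norm.symm
  set μ := ⟪A x₀, x₀⟫ with hμdef
  have hμ : 0 < μ := hApos x₀ hx₀ne
  have hlow : ∀ x : EuclideanSpace ℝ (Fin d), μ * ‖x‖ ^ 2 ≤ ⟪A x, x⟫ := by
    intro x
    rcases eq_or_ne x 0 with rfl | hx
    · simp
    · have hxn : (0 : ℝ) < ‖x‖ := norm_pos_iff.2 hx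
      set y := ‖x‖⁻¹ • x with hy
      have hymem : y ∈ Metric.sphere (0 : EuclideanSpace ℝ (Fin d)) 1 := by
        simp [hy, norm_smul, abs_of_pos (inv_pos.2 hxn), inv_mul_cancel₀ hxn.ne']
      have h1 : μ ≤ ⟪A y, y⟫ := isMinOn_iff.mp hmin y hymem
      have h2 : ⟪A y, y⟫ = ‖x‖⁻¹ * (‖x‖⁻¹ * ⟪A x, x⟫) := by
        rw [hy, map_smul, real_inner_smul_left, real_inner_smul_right]
      rw [h2] at h1
      have h3 : μ * ‖x‖ ^ 2 ≤ ‖x‖⁻¹ * (‖x‖⁻¹ * ⟪A x, x⟫) * ‖x‖ ^ 2 :=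
        mul_le_mul_of_nonneg_right h1 (by positivity)
      calc μ * ‖x‖ ^ 2 ≤ ‖x‖⁻¹ * (‖x‖⁻¹ * ⟪A x, x⟫) * ‖x‖ ^ 2 := h3
        _ = ⟪A x, x⟫ := by
            rw [pow_two]
            field_simp
  -- contraction bound for `1 - t • A`
  have key : ∀ t : ℝ, 0 ≤ t → t * ‖A‖ ^ 2 ≤ μ → t * μ ≤ 1 →
      ‖(1 : EuclideanSpace ℝ (Fin d) →L[ℝ] EuclideanSpace ℝ (Fin d)) - t • A‖ ≤ 1 - t * μ / 2 := by
    intro t ht htA htμ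
    have hb : (0 : ℝ) ≤ 1 - t * μ / 2 := by linarith
    refine ContinuousLinearMap.opNorm_le_bound _ hb fun x => ?_
    have happ : ((1 : EuclideanSpace ℝ (Fin d) →L[ℝ] EuclideanSpace ℝ (Fin d)) - t • A) x = x - t • A x := by
      simp [ContinuousLinearMap.sub_apply, ContinuousLinearMap.smul_apply]
    rw [happ]
    have hAx : ‖A x‖ ≤ ‖A‖ * ‖x‖ := A.le_opNorm x
    have hAx2 : ‖A x‖ ^ 2 ≤ ‖A‖ ^ 2 * ‖x‖ ^ 2 := by
      have := mul_self_le_mul_self (norm_nonneg (A x)) hAx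
      nlinarith [norm_nonneg (A x), norm_nonneg A, norm_nonneg x]
    have hip : μ * ‖x‖ ^ 2 ≤ ⟪x, A x⟫ := by
      rw [real_inner_comm]; exact hlow x
    have hexp : ‖x - t • A x‖ ^ 2 = ‖x‖ ^ 2 - 2 * (t * ⟪x, A x⟫) + t ^ 2 * ‖A x‖ ^ 2 := by
      rw [norm_sub_sq_real, real_inner_smul_right, norm_smul, Real.norm_eq_abs,
        abs_of_nonneg ht]
      ring
    have hsq : ‖x - t • A x‖ ^ 2 ≤ ((1 - t * μ / 2) * ‖x‖) ^ 2 := by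
      rw [hexp]
      have hμx : 0 ≤ ‖x‖ ^ 2 := sq_nonneg _
      nlinarith [sq_nonneg (t * μ), sq_nonneg ‖x‖, mul_le_mul_of_nonneg_right htA hμx,
        mul_le_mul_of_nonneg_left hip ht, sq_nonneg (t * μ * ‖x‖)]
    have h4 := Real.sqrt_le_sqrt hsq
    rwa [Real.sqrt_sq (norm_nonneg _), Real.sqrt_sq (by positivity)] at h4
  -- pick the threshold N
  set B : ℕ → EuclideanSpace ℝ (Fin d) →L[ℝ] EuclideanSpace ℝ (Fin d) := fun l => 1 - (l : ℝ) ^ (-χ) • A + η l • 1 with hB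
  have hcast : Tendsto (fun l : ℕ => (l : ℝ)) atTop atTop := tendsto_natCast_atTop_atTop
  have ht0 : Tendsto (fun l : ℕ => (l : ℝ) ^ (-χ)) atTop (𝓝 0) :=
    (tendsto_rpow_neg_atTop hχ0).comp hcast
  have ht1 : Tendsto (fun l : ℕ => (l : ℝ) ^ (-χ) * ‖A‖ ^ 2) atTop (𝓝 0) := by
    simpa using ht0.mul_const (‖A‖ ^ 2)
  have ht2 : Tendsto (fun l : ℕ => (l : ℝ) ^ (-χ) * μ) atTop (𝓝 0) := by
    simpa using ht0.mul_const μ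
  have ht3 : Tendsto (fun l : ℕ => η' * (l : ℝ) ^ (χ - θ)) atTop (𝓝 0) := by
    have : Tendsto (fun l : ℕ => (l : ℝ) ^ (χ - θ)) atTop (𝓝 0) := by
      have := (tendsto_rpow_neg_atTop (by linarith : (0:ℝ) < θ - χ)).comp hcast
      simpa [neg_sub, Function.comp_def] using this
    simpa using this.const_mul η'
  have e1 : ∀ᶠ l : ℕ in atTop, (l : ℝ) ^ (-χ) * ‖A‖ ^ 2 ≤ μ :=
    (ht1.eventually_lt_const hμ).mono fun l h => h.le
  have e2 : ∀ᶠ l : ℕ in atTop, (l : ℝ) ^ (-χ) * μ ≤ 1 :=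
    (ht2.eventually_lt_const one_pos).mono fun l h => h.le
  have e3 : ∀ᶠ l : ℕ in atTop, η' * (l : ℝ) ^ (χ - θ) ≤ μ / 4 :=
    (ht3.eventually_lt_const (by positivity)).mono fun l h => h.le
  obtain ⟨N, hN⟩ := (((e1.and e2).and e3).and (eventually_ge_atTop 1)).exists_forall_of_atTop
  have hN1 : 1 ≤ N := (hN N le_rfl).2
  -- norm bound on `B l` for `l ≥ N`
  have hBnn : ∀ l, l ≥ N → ‖B l‖ ≤ Real.exp (-(μ / 4 * (l : ℝ) ^ (-χ))) := by
    intro l hl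
    obtain ⟨⟨⟨hl1, hl2⟩, hl3⟩, hl4⟩ := hN l hl
    have htpos : (0 : ℝ) ≤ (l : ℝ) ^ (-χ) := Real.rpow_nonneg (Nat.cast_nonneg l) _
    have hkey := key _ htpos hl1 hl2
    have hηl := hη l hl4
    have hlpos : (0 : ℝ) < (l : ℝ) := by exact_mod_cast hl4
    have hηle : η l ≤ μ / 4 * (l : ℝ) ^ (-χ) := by
      have hsplit : (l : ℝ) ^ (-θ) = (l : ℝ) ^ (χ - θ) * (l : ℝ) ^ (-χ) := by
        rw [← Real.rpow_add hlpos]; ring_nf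
      calc η l ≤ η' * (l : ℝ) ^ (-θ) := hηl.2
        _ = η' * (l : ℝ) ^ (χ - θ) * (l : ℝ) ^ (-χ) := by rw [hsplit]; ring
        _ ≤ μ / 4 * (l : ℝ) ^ (-χ) := mul_le_mul_of_nonneg_right hl3 htpos
    have hnorm1 : ‖(η l) • (1 : EuclideanSpace ℝ (Fin d) →L[ℝ] EuclideanSpace ℝ (Fin d))‖ ≤ η l := by
      refine ContinuousLinearMap.opNorm_le_bound _ hηl.1 fun x => ?_
      rw [ContinuousLinearMap.smul_apply, ContinuousLinearMap.one_apply, norm_smul,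
        Real.norm_eq_abs, abs_of_nonneg hηl.1]
    have hBle : ‖B l‖ ≤ (1 - (l : ℝ) ^ (-χ) * μ / 2) + η l := by
      calc ‖B l‖ ≤ ‖(1 : EuclideanSpace ℝ (Fin d) →L[ℝ] EuclideanSpace ℝ (Fin d)) - (l : ℝ) ^ (-χ) • A‖ + ‖(η l) • (1 : EuclideanSpace ℝ (Fin d) →L[ℝ] EuclideanSpace ℝ (Fin d))‖ :=
            norm_add_le _ _
        _ ≤ (1 - (l : ℝ) ^ (-χ) * μ / 2) + η l := add_le_add hkey hnorm1
    have hone : (1 : ℝ) - μ / 4 * (l : ℝ) ^ (-χ) ≤ Real.exp (-(μ / 4 * (l : ℝ) ^ (-χ))) := by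
      linarith [Real.add_one_le_exp (-(μ / 4 * (l : ℝ) ^ (-χ)))]
    calc ‖B l‖ ≤ (1 - (l : ℝ) ^ (-χ) * μ / 2) + η l := hBle
      _ ≤ 1 - μ / 4 * (l : ℝ) ^ (-χ) := by linarith
      _ ≤ Real.exp (-(μ / 4 * (l : ℝ) ^ (-χ))) := hone
  -- divergence of partial sums of `l ^ (-χ)`
  set S : ℕ → ℝ := fun n => ∑ i ∈ Finset.range n, (i : ℝ) ^ (-χ) with hS
  have hSnn : ∀ i : ℕ, (0 : ℝ) ≤ (i : ℝ) ^ (-χ) := fun i =>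
    Real.rpow_nonneg (Nat.cast_nonneg i) _
  have hSdiv : Tendsto S atTop atTop := by
    refine (not_summable_iff_tendsto_nat_atTop_of_nonneg hSnn).1 ?_
    rw [Real.summable_nat_rpow]
    linarith
  -- the main estimate for the product up to m
  set C : ℝ := ∏ l ∈ Finset.Ico 1 N, ‖B l‖ with hC
  have hCnn : 0 ≤ C := Finset.prod_nonneg fun _ _ => norm_nonneg _
  have hbound : ∀ m : ℕ, m ≥ N →
      ‖prodDesc B 1 m‖ ≤ C * Real.exp (-(μ / 4) * (S (m + 1) - S N)) := by
    intro m hm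
    have h1 : ‖prodDesc B 1 m‖ ≤ ∏ i ∈ Finset.range m, ‖B (i + 1)‖ :=
      norm_prodDesc_one_le B m
    have h2 : (∏ i ∈ Finset.range m, ‖B (i + 1)‖) = ∏ l ∈ Finset.Ico 1 (m + 1), ‖B l‖ := by
      rw [Finset.prod_Ico_eq_prod_range]
      simp [add_comm]
    have hNm : N ≤ m + 1 := le_trans hm (Nat.le_succ m)
    have h3 : (∏ l ∈ Finset.Ico 1 (m + 1), ‖B l‖)
        = C * ∏ l ∈ Finset.Ico N (m + 1), ‖B l‖ := by
      rw [hC, Finset.prod_Ico_consecutive _ hN1 hNm]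
    have h4 : (∏ l ∈ Finset.Ico N (m + 1), ‖B l‖)
        ≤ ∏ l ∈ Finset.Ico N (m + 1), Real.exp (-(μ / 4 * (l : ℝ) ^ (-χ))) := by
      refine Finset.prod_le_prod (fun l _ => norm_nonneg _) fun l hl => ?_
      exact hBnn l (Finset.mem_Ico.mp hl).1
    have h5 : (∏ l ∈ Finset.Ico N (m + 1), Real.exp (-(μ / 4 * (l : ℝ) ^ (-χ))))
        = Real.exp (-(μ / 4) * (S (m + 1) - S N)) := by
      rw [← Real.exp_sum]
      congr 1
      have hsum : ∀ n : ℕ, ∑ k ∈ Finset.range n, -(μ / 4 * (k : ℝ) ^ (-χ)) = -(μ / 4) * S n := by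
        intro n
        simp only [hS, Finset.mul_sum]
        exact Finset.sum_congr rfl fun k _ => by ring
      rw [Finset.sum_Ico_eq_sub _ hNm, hsum, hsum]
      ring
    calc ‖prodDesc B 1 m‖ ≤ ∏ i ∈ Finset.range m, ‖B (i + 1)‖ := h1
      _ = C * ∏ l ∈ Finset.Ico N (m + 1), ‖B l‖ := by rw [h2, h3]
      _ ≤ C * Real.exp (-(μ / 4) * (S (m + 1) - S N)) := by
          rw [← h5]; exact mul_le_mul_of_nonneg_left h4 hCnn
  -- the bounding sequence tends to 0
  have hT : Tendsto (fun m : ℕ => S (m + 1) - S N) atTop atTop := by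
    have h1 : Tendsto (fun m : ℕ => S (m + 1)) atTop atTop :=
      hSdiv.comp (tendsto_add_atTop_nat 1)
    simpa [sub_eq_add_neg] using tendsto_atTop_add_const_right atTop (-S N) h1
  have hexp0 : Tendsto (fun m : ℕ => C * Real.exp (-(μ / 4) * (S (m + 1) - S N)))
      atTop (𝓝 0) := by
    have h1 : Tendsto (fun m : ℕ => -(μ / 4) * (S (m + 1) - S N)) atTop atBot :=
      (tendsto_const_mul_atBot_of_neg (by linarith : -(μ / 4) < 0)).2 hT
    have h2 : Tendsto (fun m : ℕ => Real.exp (-(μ / 4) * (S (m + 1) - S N))) atTop (𝓝 0) :=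
      Real.tendsto_exp_atBot.comp h1
    simpa using h2.const_mul C
  -- squeeze
  have main : Tendsto (fun m : ℕ => ‖prodDesc B 1 m‖) atTop (𝓝 0) := by
    refine tendsto_of_tendsto_of_tendsto_of_le_of_le' tendsto_const_nhds hexp0
      (Eventually.of_forall fun m => norm_nonneg _) ?_
    filter_upwards [eventually_ge_atTop N] with m hm
    exact hbound m hm
  exact main.comp (tendsto_sub_atTop_nat 1)
end

section
/- Let χ ∈ (0,1), θ ∈ (χ,1], η̄ > 0, {η_l} real numbers with 0 ≤ η_l ≤ η̄ l^{-θ}, and A a symmetric positive-definite real d×d matrix. Define F_{j,n} = j^{-χ} ∏_{l=j+1}^{n−1} (I − l^{-χ}A + η_l I) for 1 ≤ j ≤ n−1 (products in decreasing order of index). If {z_j} is a sequence in ℝ^d with |n^{-χ} Σ_{j=1}^n z_j| → 0 as n → ∞, then |Σ_{j=1}^{n−1} F_{j,n} z_j| → 0 as n → ∞. -/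
open Filter Finset
open scoped RealInnerProductSpace Topology

lemma prodDesc_empty {d : ℕ}
    (B : ℕ → EuclideanSpace ℝ (Fin d) →L[ℝ] EuclideanSpace ℝ (Fin d)) (q : ℕ) :
    prodDesc B (q + 1) q = 1 := by
  simp [prodDesc]

lemma prodDesc_succ {d : ℕ}
    (B : ℕ → EuclideanSpace ℝ (Fin d) →L[ℝ] EuclideanSpace ℝ (Fin d)) (p q : ℕ)
    (h : p ≤ q + 1) :
    prodDesc B p (q + 1) = B (q + 1) * prodDesc B p q := by
  unfold prodDesc
  have h1 : q + 1 + 1 - p = (q + 1 - p) + 1 := by omega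
  rw [h1, List.range_succ_eq_map]
  simp only [List.map_cons, List.prod_cons, List.map_map]
  congr 1
  congr 1
  apply List.map_congr_left
  intro i hi
  simp only [Function.comp_apply, Nat.succ_eq_add_one]
  congr 1
  omega

lemma contraction (v ρ : ℕ → ℝ) (ε : ℝ) (hε : 0 < ε) (N : ℕ)
    (hρ0 : ∀ n, N ≤ n → 0 ≤ ρ n) (hρ1 : ∀ n, N ≤ n → ρ n ≤ 1)
    (hv0 : ∀ n, 0 ≤ v n)
    (hrec : ∀ n, N ≤ n → v (n + 1) ≤ (1 - ρ n) * v n + ρ n * ε)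
    (hdiv : Tendsto (fun n => ∑ l ∈ Finset.Ico N n, ρ l) atTop atTop) :
    ∀ᶠ n in atTop, v n ≤ 2 * ε := by
  have key : ∀ n, N ≤ n → v n ≤ ε + (∏ l ∈ Finset.Ico N n, (1 - ρ l)) * v N := by
    intro n hn
    induction n with
    | zero => simp_all; nlinarith [hv0 0]
    | succ m ih =>
      rcases Nat.lt_or_ge N (m + 1) with hNm | hNm
      · have hm : N ≤ m := by omega
        have ihm := ih hm
        have h1 : 0 ≤ 1 - ρ m := by linarith [hρ1 m hm]
        have h2 : ρ m ≤ 1 := hρ1 m hm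
        have h3 : 0 ≤ ρ m := hρ0 m hm
        have hP : 0 ≤ ∏ l ∈ Finset.Ico N m, (1 - ρ l) := by
          apply Finset.prod_nonneg
          intro l hl
          simp only [Finset.mem_Ico] at hl
          linarith [hρ1 l hl.1]
        rw [Finset.prod_Ico_succ_top hm]
        calc v (m + 1) ≤ (1 - ρ m) * v m + ρ m * ε := hrec m hm
          _ ≤ (1 - ρ m) * (ε + (∏ l ∈ Finset.Ico N m, (1 - ρ l)) * v N) + ρ m * ε := by
              apply add_le_add_left
              exact mul_le_mul_of_nonneg_left ihm h1
          _ ≤ ε + (∏ l ∈ Finset.Ico N m, (1 - ρ l)) * (1 - ρ m) * v N := by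
              nlinarith [hv0 N, mul_nonneg hP (hv0 N)]
      · have : N = m + 1 := by omega
        subst this
        simp
        linarith
  -- the product tends to 0
  have hprod : Tendsto (fun n => (∏ l ∈ Finset.Ico N n, (1 - ρ l)) * v N) atTop (𝓝 0) := by
    have hb : ∀ᶠ n in atTop, (∏ l ∈ Finset.Ico N n, (1 - ρ l)) * v N
        ≤ Real.exp (-(∑ l ∈ Finset.Ico N n, ρ l)) * v N := by
      filter_upwards [eventually_ge_atTop N] with n hn
      apply mul_le_mul_of_nonneg_right _ (hv0 N)
      calc (∏ l ∈ Finset.Ico N n, (1 - ρ l)) ≤ ∏ l ∈ Finset.Ico N n, Real.exp (-ρ l) := by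
            apply Finset.prod_le_prod
            · intro l hl
              simp only [Finset.mem_Ico] at hl
              linarith [hρ1 l hl.1]
            · intro l hl
              have := Real.add_one_le_exp (-ρ l)
              linarith
        _ = Real.exp (-(∑ l ∈ Finset.Ico N n, ρ l)) := by
            rw [← Real.exp_sum]
            simp
    have hlow : ∀ᶠ n in atTop, (0:ℝ) ≤ (∏ l ∈ Finset.Ico N n, (1 - ρ l)) * v N := by
      filter_upwards [eventually_ge_atTop N] with n hn
      apply mul_nonneg _ (hv0 N)
      apply Finset.prod_nonneg
      intro l hl
      simp only [Finset.mem_Ico] at hl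
      linarith [hρ1 l hl.1]
    have hexp : Tendsto (fun n => Real.exp (-(∑ l ∈ Finset.Ico N n, ρ l)) * v N) atTop (𝓝 0) := by
      rw [show (0:ℝ) = 0 * v N by ring]
      apply Tendsto.mul_const
      exact Real.tendsto_exp_atBot.comp (tendsto_neg_atBot_iff.mpr hdiv)
    exact squeeze_zero' hlow hb hexp
  have : ∀ᶠ n in atTop, (∏ l ∈ Finset.Ico N n, (1 - ρ l)) * v N < ε := by
    have := hprod.eventually (eventually_lt_nhds hε)
    simpa using this
  filter_upwards [this, eventually_ge_atTop N] with n h1 h2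
  have := key n h2
  linarith

lemma exists_lam {d : ℕ} (hd : 0 < d)
    (A : EuclideanSpace ℝ (Fin d) →L[ℝ] EuclideanSpace ℝ (Fin d))
    (hApos : ∀ x : EuclideanSpace ℝ (Fin d), x ≠ 0 → 0 < ⟪A x, x⟫) :
    ∃ lam > 0, ∀ x : EuclideanSpace ℝ (Fin d), lam * ‖x‖ ^ 2 ≤ ⟪A x, x⟫ := by
  haveI : Nonempty (Fin d) := ⟨⟨0, hd⟩⟩
  haveI : Nontrivial (EuclideanSpace ℝ (Fin d)) := by
    refine ⟨EuclideanSpace.single ⟨0, hd⟩ (1:ℝ), 0, ?_⟩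
    intro h
    have := congrArg (fun v => v ⟨0, hd⟩) h
    simp [EuclideanSpace.single] at this
  have hsph : (Metric.sphere (0 : EuclideanSpace ℝ (Fin d)) 1).Nonempty :=
    NormedSpace.sphere_nonempty.2 zero_le_one
  have hcomp : IsCompact (Metric.sphere (0 : EuclideanSpace ℝ (Fin d)) 1) :=
    isCompact_sphere 0 1
  have hcont : Continuous (fun x : EuclideanSpace ℝ (Fin d) => ⟪A x, x⟫) :=
    (A.continuous.inner continuous_id)
  obtain ⟨x₀, hx₀mem, hx₀min⟩ := hcomp.exists_isMinOn hsph hcont.continuousOn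
  have hx₀norm : ‖x₀‖ = 1 := by simpa using hx₀mem
  have hx₀ne : x₀ ≠ 0 := by
    intro h; rw [h] at hx₀norm; simp at hx₀norm
  refine ⟨⟪A x₀, x₀⟫, hApos x₀ hx₀ne, ?_⟩
  intro x
  rcases eq_or_ne x 0 with rfl | hx
  · simp
  · have hxn : ‖x‖ ≠ 0 := norm_ne_zero_iff.2 hx
    set u : EuclideanSpace ℝ (Fin d) := ‖x‖⁻¹ • x with hu
    have humem : u ∈ Metric.sphere (0 : EuclideanSpace ℝ (Fin d)) 1 := by
      simp [hu, norm_smul, abs_of_nonneg (inv_nonneg.2 (norm_nonneg x)),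
        inv_mul_cancel₀ hxn]
    have hmin := hx₀min humem
    have hcalc : ⟪A u, u⟫ = ‖x‖⁻¹ ^ 2 * ⟪A x, x⟫ := by
      rw [hu, map_smul, real_inner_smul_left, real_inner_smul_right]
      ring
    have h2 : ⟪A x₀, x₀⟫ ≤ ‖x‖⁻¹ ^ 2 * ⟪A x, x⟫ := by
      rw [← hcalc]
      exact hmin
    have hpos : (0:ℝ) < ‖x‖ ^ 2 := by positivity
    calc ⟪A x₀, x₀⟫ * ‖x‖ ^ 2 ≤ (‖x‖⁻¹ ^ 2 * ⟪A x, x⟫) * ‖x‖ ^ 2 :=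
          mul_le_mul_of_nonneg_right h2 hpos.le
      _ = ⟪A x, x⟫ := by field_simp

lemma opnorm_bound {d : ℕ}
    (A : EuclideanSpace ℝ (Fin d) →L[ℝ] EuclideanSpace ℝ (Fin d))
    (lam h ηv : ℝ)
    (hlam : ∀ x : EuclideanSpace ℝ (Fin d), lam * ‖x‖ ^ 2 ≤ ⟪A x, x⟫)
    (hh0 : 0 ≤ h) (hhA : h * ‖A‖ ^ 2 ≤ lam) (hh2 : lam * h ≤ 1) (hηv : 0 ≤ ηv) :
    ‖(1 : EuclideanSpace ℝ (Fin d) →L[ℝ] EuclideanSpace ℝ (Fin d)) - h • A + ηv • 1‖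
      ≤ 1 - lam / 2 * h + ηv := by
  have hlam0 : 0 ≤ lam := le_trans (by positivity) hhA
  apply ContinuousLinearMap.opNorm_le_bound _ (by nlinarith)
  intro x
  have happ : ((1 : EuclideanSpace ℝ (Fin d) →L[ℝ] EuclideanSpace ℝ (Fin d))
      - h • A + ηv • 1) x = (x - h • A x) + ηv • x := by
    simp [ContinuousLinearMap.sub_apply, ContinuousLinearMap.add_apply]
  rw [happ]
  have key : ‖x - h • A x‖ ≤ (1 - lam / 2 * h) * ‖x‖ := by
    have hsq : ‖x - h • A x‖ ^ 2 = ‖x‖ ^ 2 - 2 * (h * ⟪A x, x⟫) + h ^ 2 * ‖A x‖ ^ 2 := by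
      rw [norm_sub_sq_real]
      rw [real_inner_smul_right, real_inner_comm]
      rw [norm_smul]
      simp [abs_of_nonneg hh0]
      ring
    have hAx : ‖A x‖ ≤ ‖A‖ * ‖x‖ := A.le_opNorm x
    have hAx2 : ‖A x‖ ^ 2 ≤ ‖A‖ ^ 2 * ‖x‖ ^ 2 := by nlinarith [norm_nonneg (A x), norm_nonneg x, norm_nonneg A]
    have hin := hlam x
    have hb0 : 0 ≤ (1 - lam / 2 * h) := by nlinarith
    have hsqle : ‖x - h • A x‖ ^ 2 ≤ ((1 - lam / 2 * h) * ‖x‖) ^ 2 := by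
      rw [hsq]
      nlinarith [mul_le_mul_of_nonneg_left hin hh0, mul_le_mul_of_nonneg_left hhA hh0,
        mul_le_mul_of_nonneg_left hAx2 (sq_nonneg h), sq_nonneg (‖x‖), sq_nonneg h,
        sq_nonneg (lam * h * ‖x‖), mul_nonneg (mul_nonneg hh0 hlam0) (sq_nonneg ‖x‖)]
    nlinarith [norm_nonneg (x - h • A x), mul_nonneg hb0 (norm_nonneg x), hsqle]
  calc ‖(x - h • A x) + ηv • x‖ ≤ ‖x - h • A x‖ + ‖ηv • x‖ := norm_add_le _ _
    _ ≤ (1 - lam / 2 * h) * ‖x‖ + ηv * ‖x‖ := by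
        rw [norm_smul]; simp [abs_of_nonneg hηv]; exact key
    _ = (1 - lam / 2 * h + ηv) * ‖x‖ := by ring

lemma rpow_add_one_le (x p : ℝ) (hx : 0 ≤ x) (hp0 : 0 ≤ p) (hp1 : p ≤ 1) :
    (x + 1) ^ p ≤ x ^ p + 1 := by
  have h := NNReal.rpow_add_le_add_rpow x.toNNReal 1 hp0 hp1
  have h2 := NNReal.coe_le_coe.2 h
  push_cast at h2
  rw [Real.coe_toNNReal x hx] at h2
  simpa using h2


set_option maxHeartbeats 2000000 in
/-- Lemma 2 ii), first part: with `F_{j,n} = j^{-χ} ∏_{l=j+1}^{n−1}(I − l^{-χ}A + η_l I)`,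
if `|n^{-χ} Σ_{j=1}^n z_j| → 0` then `|Σ_{j=1}^{n−1} F_{j,n} z_j| → 0`. -/
theorem stmt_7 (d : ℕ) (hd : 0 < d) (χ θ η' : ℝ) (hχ : χ ∈ Set.Ioo (0 : ℝ) 1)
    (hθ : θ ∈ Set.Ioc χ 1) (hη' : 0 < η')
    (η : ℕ → ℝ) (hη : ∀ l : ℕ, 1 ≤ l → 0 ≤ η l ∧ η l ≤ η' * (l : ℝ) ^ (-θ))
    (A : EuclideanSpace ℝ (Fin d) →L[ℝ] EuclideanSpace ℝ (Fin d))
    (hAsym : ∀ x y : EuclideanSpace ℝ (Fin d), ⟪A x, y⟫ = ⟪x, A y⟫)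
    (hApos : ∀ x : EuclideanSpace ℝ (Fin d), x ≠ 0 → 0 < ⟪A x, x⟫)
    (z : ℕ → EuclideanSpace ℝ (Fin d))
    (hz : Tendsto (fun n : ℕ => ‖(n : ℝ) ^ (-χ) • ∑ j ∈ Icc 1 n, z j‖) atTop (𝓝 0)) :
    Tendsto (fun n : ℕ =>
        ‖∑ j ∈ Icc 1 (n - 1), (j : ℝ) ^ (-χ) •
          (prodDesc (fun l => 1 - (l : ℝ) ^ (-χ) • A + η l • 1) (j + 1) (n - 1)) (z j)‖)
      atTop (𝓝 0) := by
  obtain ⟨hχ0, hχ1⟩ := hχ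
  obtain ⟨hθχ, hθ1⟩ := hθ
  set M : ℕ → EuclideanSpace ℝ (Fin d) →L[ℝ] EuclideanSpace ℝ (Fin d) :=
    fun l => 1 - (l : ℝ) ^ (-χ) • A + η l • 1 with hM
  set S : ℕ → EuclideanSpace ℝ (Fin d) := fun n => ∑ j ∈ Icc 1 n, z j with hS
  set ζ : ℕ → EuclideanSpace ℝ (Fin d) := fun n => (n : ℝ) ^ (-χ) • S n with hzeta
  set T : ℕ → EuclideanSpace ℝ (Fin d) :=
    fun n => ∑ j ∈ Icc 1 (n - 1), (j : ℝ) ^ (-χ) • prodDesc M (j + 1) (n - 1) (z j) with hT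
  show Tendsto (fun n => ‖T n‖) atTop (𝓝 0)
  have hζ : Tendsto ζ atTop (𝓝 0) := tendsto_zero_iff_norm_tendsto_zero.mpr hz
  -- the recursion for T
  have hTrec : ∀ n : ℕ, 1 ≤ n → T (n + 1) = M n (T n) + (n : ℝ) ^ (-χ) • z n := by
    intro n hn
    obtain ⟨m, rfl⟩ : ∃ m, n = m + 1 := ⟨n - 1, by omega⟩
    have hstep : ∀ j ∈ Icc 1 m, (j : ℝ) ^ (-χ) • prodDesc M (j + 1) (m + 1) (z j)
        = M (m + 1) ((j : ℝ) ^ (-χ) • prodDesc M (j + 1) m (z j)) := by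
      intro j hj
      simp only [Finset.mem_Icc] at hj
      rw [prodDesc_succ M (j + 1) m (by omega)]
      simp [ContinuousLinearMap.mul_apply, map_smul]
    have h1 : T (m + 1 + 1) = ∑ j ∈ Icc 1 (m + 1),
        (j : ℝ) ^ (-χ) • prodDesc M (j + 1) (m + 1) (z j) := by
      simp [hT]
    rw [h1, Finset.sum_Icc_succ_top (by omega : 1 ≤ m + 1)]
    rw [Finset.sum_congr rfl hstep, ← map_sum]
    have h2 : prodDesc M (m + 1 + 1) (m + 1) = 1 := prodDesc_empty M (m + 1)
    rw [h2]
    have h3 : T (m + 1) = ∑ j ∈ Icc 1 m, (j : ℝ) ^ (-χ) • prodDesc M (j + 1) m (z j) := by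
      simp [hT]
    rw [h3]
    simp
  -- V and its recursion
  set V : ℕ → EuclideanSpace ℝ (Fin d) := fun n => T n - ζ (n - 1) with hV
  set a : ℕ → ℝ := fun n => ((n - 1 : ℕ) : ℝ) ^ χ * (n : ℝ) ^ (-χ) with ha
  have hVrec : ∀ n : ℕ, 2 ≤ n →
      V (n + 1) = M n (V n) + (M n (ζ (n - 1)) - a n • ζ (n - 1)) := by
    intro n hn
    have hn1 : 1 ≤ n := by omega
    have hzrel : (n : ℝ) ^ (-χ) • z n = ζ n - a n • ζ (n - 1) := by
      have hkpos : (0 : ℝ) < ((n - 1 : ℕ) : ℝ) := by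
        have : 1 ≤ n - 1 := by omega
        exact_mod_cast Nat.lt_of_lt_of_le Nat.zero_lt_one this
      have hk : ((n - 1 : ℕ) : ℝ) ^ χ * ((n - 1 : ℕ) : ℝ) ^ (-χ) = 1 := by
        rw [← Real.rpow_add hkpos]; simp
      have hzS : z n = S n - S (n - 1) := by
        obtain ⟨m, rfl⟩ : ∃ m, n = m + 1 := ⟨n - 1, by omega⟩
        have hmS : S (m + 1) = S m + z (m + 1) := by
          simp [hS, Finset.sum_Icc_succ_top (by omega : 1 ≤ m + 1)]
        simp [hmS]
      rw [hzS, smul_sub]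
      simp only [hzeta, ha, smul_smul]
      congr 2
      rw [mul_right_comm, hk, one_mul]
    calc V (n + 1) = T (n + 1) - ζ n := by simp [hV]
      _ = M n (T n) + ((n : ℝ) ^ (-χ) • z n) - ζ n := by rw [hTrec n hn1]
      _ = M n (T n) - a n • ζ (n - 1) := by rw [hzrel]; abel
      _ = M n (V n + ζ (n - 1)) - a n • ζ (n - 1) := by simp [hV]
      _ = M n (V n) + (M n (ζ (n - 1)) - a n • ζ (n - 1)) := by rw [map_add]; abel
  -- the eigenvalue bound
  obtain ⟨lam, hlam0, hlam⟩ := exists_lam hd A hApos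
  set c : ℝ := lam / 4 with hc
  set C : ℝ := 1 + ‖A‖ + η' with hC
  have hCpos : 0 < C := by positivity
  have hcpos : 0 < c := by positivity
  set ρ : ℕ → ℝ := fun n => c * (n : ℝ) ^ (-χ) with hρ
  -- eventual bound on ‖M n‖
  have htend : Tendsto (fun n : ℕ => (n : ℝ) ^ (-χ)) atTop (𝓝 0) :=
    (tendsto_rpow_neg_atTop hχ0).comp tendsto_natCast_atTop_atTop
  have htend2 : Tendsto (fun n : ℕ => (n : ℝ) ^ (-(θ - χ))) atTop (𝓝 0) :=
    (tendsto_rpow_neg_atTop (by linarith)).comp tendsto_natCast_atTop_atTop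
  have hAn : 0 < ‖A‖ ^ 2 + 1 := by positivity
  have hδpos : 0 < min (lam / (‖A‖ ^ 2 + 1)) (1 / (lam + 1)) := by
    apply lt_min <;> positivity
  have hMn : ∀ᶠ n in atTop, ‖M n‖ ≤ 1 - ρ n := by
    filter_upwards [htend.eventually (eventually_le_nhds hδpos),
      htend2.eventually (eventually_le_nhds (by positivity : (0:ℝ) < c / η')),
      eventually_ge_atTop 1] with n h1 h2 hn1
    have hnpos : (0 : ℝ) < (n : ℝ) := by exact_mod_cast hn1
    have hh0 : (0 : ℝ) ≤ (n : ℝ) ^ (-χ) := Real.rpow_nonneg hnpos.le _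
    have hd1 : (n : ℝ) ^ (-χ) ≤ lam / (‖A‖ ^ 2 + 1) := le_trans h1 (min_le_left _ _)
    have hd2 : (n : ℝ) ^ (-χ) ≤ 1 / (lam + 1) := le_trans h1 (min_le_right _ _)
    have hhA : (n : ℝ) ^ (-χ) * ‖A‖ ^ 2 ≤ lam := by
      have h4 := (le_div_iff₀ hAn).mp hd1
      linarith
    have hh2 : lam * (n : ℝ) ^ (-χ) ≤ 1 := by
      have h4 := (le_div_iff₀ (by positivity : (0:ℝ) < lam + 1)).mp hd2
      nlinarith
    have hηn : η n ≤ c * (n : ℝ) ^ (-χ) := by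
      have hsplit : (n : ℝ) ^ (-θ) = (n : ℝ) ^ (-(θ - χ)) * (n : ℝ) ^ (-χ) := by
        rw [← Real.rpow_add hnpos]; ring_nf
      have := (hη n hn1).2
      have h3 : η' * (n : ℝ) ^ (-(θ - χ)) ≤ c := by
        have h4 := (le_div_iff₀ hη').mp h2
        linarith [h4]
      calc η n ≤ η' * (n : ℝ) ^ (-θ) := this
        _ = (η' * (n : ℝ) ^ (-(θ - χ))) * (n : ℝ) ^ (-χ) := by rw [hsplit]; ring
        _ ≤ c * (n : ℝ) ^ (-χ) := mul_le_mul_of_nonneg_right h3 hh0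
    have hb := opnorm_bound A lam ((n : ℝ) ^ (-χ)) (η n) hlam hh0 hhA hh2 (hη n hn1).1
    calc ‖M n‖ ≤ 1 - lam / 2 * (n : ℝ) ^ (-χ) + η n := hb
      _ ≤ 1 - ρ n := by
          simp only [hρ, hc]
          simp only [hρ, hc] at hηn
          linarith
  -- second-term bound
  have hsecond : ∀ᶠ n in atTop, ∀ y : EuclideanSpace ℝ (Fin d),
      ‖M n y - a n • y‖ ≤ C * (n : ℝ) ^ (-χ) * ‖y‖ := by
    filter_upwards [eventually_ge_atTop 2] with n hn2 y
    have hn1 : 1 ≤ n := by omega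
    have hnpos : (0 : ℝ) < (n : ℝ) := by exact_mod_cast hn1
    have hh0 : (0 : ℝ) ≤ (n : ℝ) ^ (-χ) := Real.rpow_nonneg hnpos.le _
    have hcast : ((n : ℕ) : ℝ) = ((n - 1 : ℕ) : ℝ) + 1 := by
      have : n = (n - 1) + 1 := by omega
      rw [this]; push_cast; ring
    have hknn : (0 : ℝ) ≤ ((n - 1 : ℕ) : ℝ) := Nat.cast_nonneg _
    have hsub : (n : ℝ) ^ χ ≤ ((n - 1 : ℕ) : ℝ) ^ χ + 1 := by
      rw [hcast]
      exact rpow_add_one_le _ _ hknn hχ0.le hχ1.le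
    have hnn : (n : ℝ) ^ χ * (n : ℝ) ^ (-χ) = 1 := by
      rw [← Real.rpow_add hnpos]; simp
    have hka : ((n - 1 : ℕ) : ℝ) ^ χ ≤ (n : ℝ) ^ χ :=
      Real.rpow_le_rpow hknn (by rw [hcast]; linarith) hχ0.le
    have ha1 : a n ≤ 1 := by
      simp only [ha]
      calc ((n - 1 : ℕ) : ℝ) ^ χ * (n : ℝ) ^ (-χ) ≤ (n : ℝ) ^ χ * (n : ℝ) ^ (-χ) :=
            mul_le_mul_of_nonneg_right hka hh0
        _ = 1 := hnn
    have ha2 : 1 - a n ≤ (n : ℝ) ^ (-χ) := by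
      simp only [ha]
      have hmul := mul_le_mul_of_nonneg_right hsub hh0
      rw [hnn, add_mul, one_mul] at hmul
      linarith
    have hηn : η n ≤ η' * (n : ℝ) ^ (-χ) := by
      calc η n ≤ η' * (n : ℝ) ^ (-θ) := (hη n hn1).2
        _ ≤ η' * (n : ℝ) ^ (-χ) := by
            apply mul_le_mul_of_nonneg_left _ hη'.le
            apply Real.rpow_le_rpow_of_exponent_le (by exact_mod_cast hn1)
            linarith
    have hexp : M n y - a n • y = ((1 - a n) • y - (n : ℝ) ^ (-χ) • A y) + η n • y := by
      have hMny : M n y = y - (n : ℝ) ^ (-χ) • A y + η n • y := by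
        simp only [hM, ContinuousLinearMap.add_apply, ContinuousLinearMap.sub_apply,
          ContinuousLinearMap.smul_apply, ContinuousLinearMap.one_apply]
      rw [hMny, sub_smul, one_smul]
      abel
    rw [hexp]
    have hAy : ‖A y‖ ≤ ‖A‖ * ‖y‖ := A.le_opNorm y
    have hη0 : 0 ≤ η n := (hη n hn1).1
    calc ‖((1 - a n) • y - (n : ℝ) ^ (-χ) • A y) + η n • y‖
        ≤ ‖(1 - a n) • y - (n : ℝ) ^ (-χ) • A y‖ + ‖η n • y‖ := norm_add_le _ _
      _ ≤ (‖(1 - a n) • y‖ + ‖(n : ℝ) ^ (-χ) • A y‖) + ‖η n • y‖ := by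
          gcongr; exact norm_sub_le _ _
      _ = (1 - a n) * ‖y‖ + (n : ℝ) ^ (-χ) * ‖A y‖ + η n * ‖y‖ := by
          rw [norm_smul, norm_smul, norm_smul]
          rw [Real.norm_eq_abs, Real.norm_eq_abs, Real.norm_eq_abs,
            abs_of_nonneg (by linarith), abs_of_nonneg hh0, abs_of_nonneg hη0]
      _ ≤ (n : ℝ) ^ (-χ) * ‖y‖ + (n : ℝ) ^ (-χ) * (‖A‖ * ‖y‖) + (η' * (n : ℝ) ^ (-χ)) * ‖y‖ := by
          exact add_le_add (add_le_add (mul_le_mul_of_nonneg_right ha2 (norm_nonneg y))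
            (mul_le_mul_of_nonneg_left hAy hh0)) (mul_le_mul_of_nonneg_right hηn (norm_nonneg y))
      _ = C * (n : ℝ) ^ (-χ) * ‖y‖ := by simp only [hC]; ring
  -- divergence of ∑ ρ
  have hdiv : ∀ N : ℕ, Tendsto (fun n => ∑ l ∈ Finset.Ico N n, ρ l) atTop atTop := by
    intro N
    have hns : ¬ Summable (fun n : ℕ => (n : ℝ) ^ (-χ)) := by
      rw [Real.summable_nat_rpow]
      linarith
    have hnge : ∀ n : ℕ, 0 ≤ (n : ℝ) ^ (-χ) := fun n => Real.rpow_nonneg (Nat.cast_nonneg n) _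
    have hsum : Tendsto (fun n => ∑ l ∈ Finset.range n, (l : ℝ) ^ (-χ)) atTop atTop :=
      (not_summable_iff_tendsto_nat_atTop_of_nonneg hnge).mp hns
    have h2 : Tendsto (fun n => ∑ l ∈ Finset.Ico N n, (l : ℝ) ^ (-χ)) atTop atTop := by
      apply Tendsto.congr' _ (tendsto_atTop_add_const_right atTop
        (-(∑ l ∈ Finset.range N, (l : ℝ) ^ (-χ))) hsum)
      filter_upwards [eventually_ge_atTop N] with n hn
      rw [Finset.sum_Ico_eq_sub _ hn]
      ring
    have h3 := h2.const_mul_atTop hcpos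
    apply h3.congr
    intro n
    simp only [hρ, Finset.mul_sum]
  -- conclusion
  rw [← tendsto_zero_iff_norm_tendsto_zero, NormedAddCommGroup.tendsto_nhds_zero]
  intro ε hε
  set ε' : ℝ := ε / 4 with hε'def
  have hε' : 0 < ε' := by positivity
  have hζn : Tendsto (fun n : ℕ => ζ (n - 1)) atTop (𝓝 0) :=
    hζ.comp (tendsto_sub_atTop_nat 1)
  have hζnorm : Tendsto (fun n : ℕ => ‖ζ (n - 1)‖) atTop (𝓝 0) :=
    tendsto_zero_iff_norm_tendsto_zero.mp hζn
  have hbig : ∀ᶠ n in atTop, (‖M n‖ ≤ 1 - ρ n) ∧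
      (∀ y : EuclideanSpace ℝ (Fin d), ‖M n y - a n • y‖ ≤ C * (n : ℝ) ^ (-χ) * ‖y‖) ∧
      ‖ζ (n - 1)‖ ≤ c * ε' / C ∧ ρ n ≤ 1 ∧ 2 ≤ n := by
    have hc1 : ∀ᶠ n : ℕ in atTop, ρ n ≤ 1 := by
      filter_upwards [htend.eventually (eventually_le_nhds
        (by positivity : (0:ℝ) < 1 / c))] with n h1
      simp only [hρ]
      have := (le_div_iff₀ hcpos).mp h1
      linarith
    filter_upwards [hMn, hsecond,
      hζnorm.eventually (eventually_le_nhds (by positivity : (0:ℝ) < c * ε' / C)),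
      hc1, eventually_ge_atTop 2] with n h1 h2 h3 h4 h5
    exact ⟨h1, h2, h3, h4, h5⟩
  obtain ⟨N, hN⟩ := eventually_atTop.mp hbig
  have hrec : ∀ n, N ≤ n → ‖V (n + 1)‖ ≤ (1 - ρ n) * ‖V n‖ + ρ n * ε' := by
    intro n hn
    obtain ⟨h1, h2, h3, h4, h5⟩ := hN n hn
    have hnpos : (0 : ℝ) < (n : ℝ) := by
      have : (1:ℕ) ≤ n := by omega
      exact_mod_cast Nat.lt_of_lt_of_le Nat.zero_lt_one this
    have hh0 : (0 : ℝ) ≤ (n : ℝ) ^ (-χ) := Real.rpow_nonneg hnpos.le _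
    rw [hVrec n h5]
    calc ‖M n (V n) + (M n (ζ (n - 1)) - a n • ζ (n - 1))‖
        ≤ ‖M n (V n)‖ + ‖M n (ζ (n - 1)) - a n • ζ (n - 1)‖ := norm_add_le _ _
      _ ≤ (1 - ρ n) * ‖V n‖ + C * (n : ℝ) ^ (-χ) * ‖ζ (n - 1)‖ := by
          apply add_le_add _ (h2 (ζ (n - 1)))
          calc ‖M n (V n)‖ ≤ ‖M n‖ * ‖V n‖ := (M n).le_opNorm _
            _ ≤ (1 - ρ n) * ‖V n‖ := mul_le_mul_of_nonneg_right h1 (norm_nonneg _)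
      _ ≤ (1 - ρ n) * ‖V n‖ + ρ n * ε' := by
          apply add_le_add_right
          calc C * (n : ℝ) ^ (-χ) * ‖ζ (n - 1)‖ ≤ C * (n : ℝ) ^ (-χ) * (c * ε' / C) := by
                apply mul_le_mul_of_nonneg_left h3 (by positivity)
            _ = ρ n * ε' := by
                simp only [hρ]
                field_simp
  have hVsmall : ∀ᶠ n in atTop, ‖V n‖ ≤ 2 * ε' :=
    contraction (fun n => ‖V n‖) ρ ε' hε' N
      (fun n _ => mul_nonneg hcpos.le (Real.rpow_nonneg (Nat.cast_nonneg n) _))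
      (fun n hn => (hN n hn).2.2.2.1)
      (fun n => norm_nonneg _)
      hrec (hdiv N)
  have hζsmall : ∀ᶠ n : ℕ in atTop, ‖ζ (n - 1)‖ < ε' :=
    hζnorm.eventually (eventually_lt_nhds hε')
  filter_upwards [hVsmall, hζsmall] with n h1 h2
  have hTn : T n = V n + ζ (n - 1) := by simp [hV]
  calc ‖T n‖ ≤ ‖V n‖ + ‖ζ (n - 1)‖ := by rw [hTn]; exact norm_add_le _ _
    _ < 2 * ε' + ε' := by linarith
    _ ≤ ε := by rw [hε'def]; linarith
end

section
/- Let χ ∈ (0,1) and a > 0, and define n_k = ⌊(ak)^{1/(1−χ)}⌋ and the index block I_k = {n_k, n_k+1, …, n_{k+1}−1} for k ≥ 0. If {Y_l} is a sequence of real d×d matrices with ‖n^{-χ} Σ_{l=1}^n Y_l‖ → 0 as n → ∞, then ‖Σ_{l∈I_k} l^{-χ} Y_l‖ → 0 as k → ∞. -/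
set_option maxHeartbeats 1600000
open Filter Finset
open scoped Topology

section aux

variable {E : Type*} [NormedAddCommGroup E] [NormedSpace ℝ E]

private lemma abel_aux (c : ℕ → ℝ) (S : ℕ → E) (n : ℕ) :
    ∀ m, n ≤ m →
      ∑ j ∈ Finset.Ico n m, c (j + 1) • (S (j + 1) - S j)
        = c m • S m - c n • S n + ∑ j ∈ Finset.Ico n m, (c j - c (j + 1)) • S j := by
  intro m hm
  induction m, hm using Nat.le_induction with
  | base => simp
  | succ m hm ih =>
      rw [Finset.sum_Ico_succ_top (by omega), Finset.sum_Ico_succ_top (by omega), ih]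
      module

private lemma telescope_aux (c : ℕ → ℝ) (n : ℕ) :
    ∀ m, n ≤ m → ∑ j ∈ Finset.Ico n m, (c j - c (j + 1)) = c n - c m := by
  intro m hm
  induction m, hm using Nat.le_induction with
  | base => simp
  | succ m hm ih =>
      rw [Finset.sum_Ico_succ_top (by omega), ih]
      ring

end aux

/-- Lemma 2 iii): with blocks `I_k = {n_k, …, n_{k+1}−1}`, `n_k = ⌊(ak)^{1/(1−χ)}⌋`,
if `‖n^{-χ} Σ_{l=1}^n Y_l‖ → 0` then `‖Σ_{l∈I_k} l^{-χ} Y_l‖ → 0`. -/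
theorem stmt_9 (d : ℕ) (hd : 0 < d) (χ a : ℝ) (hχ : χ ∈ Set.Ioo (0 : ℝ) 1) (ha : 0 < a)
    (Y : ℕ → EuclideanSpace ℝ (Fin d) →L[ℝ] EuclideanSpace ℝ (Fin d))
    (hY : Tendsto (fun n : ℕ => ‖(n : ℝ) ^ (-χ) • ∑ l ∈ Icc 1 n, Y l‖) atTop (𝓝 0)) :
    Tendsto (fun k : ℕ =>
        ‖∑ l ∈ Ico (⌊(a * k) ^ (1 / (1 - χ))⌋₊) (⌊(a * (k + 1)) ^ (1 / (1 - χ))⌋₊),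
          (l : ℝ) ^ (-χ) • Y l‖)
      atTop (𝓝 0) := by
  obtain ⟨hχ0, hχ1⟩ := hχ
  set p : ℝ := 1 / (1 - χ) with hp_def
  have hp0 : 0 < p := by
    apply div_pos one_pos; linarith
  set S : ℕ → (EuclideanSpace ℝ (Fin d) →L[ℝ] EuclideanSpace ℝ (Fin d)) :=
    fun n => ∑ l ∈ Icc 1 n, Y l with hS_def
  set c : ℕ → ℝ := fun l => (l : ℝ) ^ (-χ) with hc_def
  have hSY : ∀ j : ℕ, S (j + 1) - S j = Y (j + 1) := by
    intro j
    rw [hS_def]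
    simp only
    rw [Finset.sum_Icc_succ_top (Nat.succ_le_succ (Nat.zero_le j))]
    abel
  -- positivity / monotonicity of c on [1, ∞)
  have hc_pos : ∀ j : ℕ, 1 ≤ j → 0 < c j := by
    intro j hj
    apply Real.rpow_pos_of_pos
    exact_mod_cast hj
  have hc_anti : ∀ j : ℕ, 1 ≤ j → c (j + 1) ≤ c j := by
    intro j hj
    have h1 : (0:ℝ) < (j:ℝ) := by exact_mod_cast hj
    have h2 : (j:ℝ) ≤ (j:ℝ) + 1 := by linarith
    rw [hc_def]
    simp only
    rw [Real.rpow_neg (by positivity), Real.rpow_neg h1.le]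
    push_cast
    exact inv_anti₀ (Real.rpow_pos_of_pos h1 χ) (Real.rpow_le_rpow h1.le h2 hχ0.le)
  -- the floor sequence
  set nk : ℕ → ℕ := fun k => ⌊(a * k) ^ p⌋₊ with hnk_def
  have hnk_mono : Monotone nk := by
    intro i j hij
    apply Nat.floor_mono
    apply Real.rpow_le_rpow (by positivity)
    · have : (i:ℝ) ≤ j := by exact_mod_cast hij
      nlinarith
    · exact hp0.le
  have hnk_top : Tendsto nk atTop atTop := by
    apply tendsto_nat_floor_atTop.comp
    apply (tendsto_rpow_atTop hp0).comp
    exact Tendsto.const_mul_atTop ha tendsto_natCast_atTop_atTop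
  rw [NormedAddCommGroup.tendsto_nhds_zero] at hY ⊢
  intro ε hε
  obtain ⟨N, hN⟩ := Filter.eventually_atTop.1 (hY (ε / 4) (by positivity))
  simp only [norm_norm] at hN
  -- eventual ratio bound
  have hratio : ∀ᶠ k : ℕ in atTop, (1 + 1 / (k:ℝ)) ^ p ≤ 5 / 4 := by
    have h1 : Tendsto (fun k : ℕ => (1 + 1 / (k:ℝ)) ^ p) atTop (𝓝 1) := by
      have h2 : Tendsto (fun k : ℕ => 1 + 1 / (k:ℝ)) atTop (𝓝 1) := by
        simpa using (tendsto_one_div_atTop_nhds_zero_nat).const_add (1:ℝ)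
      have := h2.rpow_const (p := p) (Or.inl one_ne_zero)
      simpa using this
    exact h1.eventually_le_const (by norm_num)
  have hbig : ∀ᶠ k : ℕ in atTop, N + 3 ≤ nk k := hnk_top.eventually_ge_atTop (N + 3)
  filter_upwards [hbig, hratio, eventually_ge_atTop 1] with k hk1 hk2 hk3
  simp only [norm_norm]
  have hcastk : a * ((k:ℝ) + 1) = a * (((k + 1 : ℕ)):ℝ) := by push_cast; ring
  rw [hcastk]
  show ‖∑ l ∈ Finset.Ico (nk k) (nk (k + 1)), c l • Y l‖ < ε
  set n : ℕ := nk k with hn_def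
  set m : ℕ := nk (k + 1) with hm_def
  have hnm : n ≤ m := hnk_mono (Nat.le_succ k)
  have hn3 : 3 ≤ n := by omega
  -- real bounds on n and m
  have hn_real : (a * k) ^ p < (n:ℝ) + 1 := Nat.lt_floor_add_one _
  have hm_real : (m:ℝ) ≤ (a * ((k + 1 : ℕ) : ℝ)) ^ p := Nat.floor_le (by positivity)
  have hkpos : (0:ℝ) < (k:ℝ) := by exact_mod_cast hk3
  have hsplit : a * (((k + 1 : ℕ)):ℝ) = (a * k) * (1 + 1 / (k:ℝ)) := by
    push_cast
    field_simp
  have hmul : (a * ((k + 1 : ℕ) : ℝ)) ^ p ≤ (5/4) * (a * k) ^ p := by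
    rw [hsplit, Real.mul_rpow (by positivity) (by positivity)]
    have h := Real.rpow_nonneg (x := a * (k:ℝ)) (by positivity) p
    nlinarith
  clear_value n m
  clear hn_def hm_def
  -- m ≤ 2n - 1  (in ℕ), hence m - 1 ≤ 2 * (n - 1)
  have hm2n : m + 1 ≤ 2 * n := by
    have h1 : (m:ℝ) ≤ (5/4) * ((n:ℝ) + 1) := by
      nlinarith
    have h2 : (m:ℝ) + 1 ≤ 2 * n := by
      have : (3:ℝ) ≤ n := by exact_mod_cast hn3
      nlinarith
    exact_mod_cast h2
  -- reindex the block sum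
  have hreindex :
      ∑ l ∈ Finset.Ico n m, c l • Y l
        = ∑ j ∈ Finset.Ico (n - 1) (m - 1), c (j + 1) • (S (j + 1) - S j) := by
    rw [Finset.sum_Ico_eq_sum_range, Finset.sum_Ico_eq_sum_range]
    have hmn : m - 1 - (n - 1) = m - n := by omega
    rw [hmn]
    apply Finset.sum_congr rfl
    intro i _
    have h1 : n - 1 + i + 1 = n + i := by omega
    rw [hSY, h1]
  have habel := abel_aux c S (n - 1) (m - 1) (by omega)
  -- main estimate
  have key : ‖∑ l ∈ Finset.Ico n m, c l • Y l‖ < ε := by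
    rw [hreindex, habel]
    have hN1 : ∀ j : ℕ, N ≤ j → ‖c j • S j‖ < ε / 4 := fun j hj => hN j hj
    have hb1 : ‖c (m - 1) • S (m - 1)‖ < ε / 4 := hN1 _ (by omega)
    have hb2 : ‖c (n - 1) • S (n - 1)‖ < ε / 4 := hN1 _ (by omega)
    have hSb : ∀ j : ℕ, N ≤ j → 1 ≤ j → ‖S j‖ ≤ ε / 4 * (j:ℝ) ^ χ := by
      intro j hj hj1
      have h := (hN1 j hj).le
      rw [show ‖c j • S j‖ = ‖c j‖ * ‖S j‖ from norm_smul (c j) (S j),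
        Real.norm_eq_abs, abs_of_nonneg (hc_pos j hj1).le] at h
      have hjpos : (0:ℝ) < (j:ℝ) := by exact_mod_cast hj1
      have hcj : c j = ((j:ℝ) ^ χ)⁻¹ := by
        rw [hc_def]; simp only; rw [Real.rpow_neg hjpos.le]
      rw [hcj] at h
      have hpow : (0:ℝ) < (j:ℝ) ^ χ := Real.rpow_pos_of_pos hjpos χ
      rw [inv_mul_le_iff₀ hpow] at h
      calc ‖S j‖ = 1 * ‖S j‖ := (one_mul _).symm
        _ ≤ ε / 4 * (j:ℝ) ^ χ := by
            nlinarith [norm_nonneg (S j), Real.rpow_pos_of_pos hjpos χ]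
    -- bound on the inner sum
    have hsum : ‖∑ j ∈ Finset.Ico (n - 1) (m - 1), (c j - c (j + 1)) • S j‖ ≤ ε / 2 := by
      calc ‖∑ j ∈ Finset.Ico (n - 1) (m - 1), (c j - c (j + 1)) • S j‖
          ≤ ∑ j ∈ Finset.Ico (n - 1) (m - 1), ‖(c j - c (j + 1)) • S j‖ :=
            norm_sum_le _ _
        _ ≤ ∑ j ∈ Finset.Ico (n - 1) (m - 1),
              (c j - c (j + 1)) * (ε / 4 * ((m - 1 : ℕ) : ℝ) ^ χ) := by
            apply Finset.sum_le_sum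
            intro j hj
            rw [Finset.mem_Ico] at hj
            have hj1 : 1 ≤ j := by omega
            have hjN : N ≤ j := by omega
            rw [show ‖(c j - c (j + 1)) • S j‖ = ‖c j - c (j + 1)‖ * ‖S j‖ from norm_smul (c j - c (j + 1)) (S j),
              Real.norm_eq_abs, abs_of_nonneg (by linarith [hc_anti j hj1])]
            have h1 : ‖S j‖ ≤ ε / 4 * (j:ℝ) ^ χ := hSb j hjN hj1
            have h2 : (j:ℝ) ^ χ ≤ ((m - 1 : ℕ) : ℝ) ^ χ := by
              apply Real.rpow_le_rpow (by positivity) _ hχ0.le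
              exact_mod_cast (by omega : j ≤ m - 1)
            have hc0 : 0 ≤ c j - c (j + 1) := by linarith [hc_anti j hj1]
            have h3 : ‖S j‖ ≤ ε / 4 * ((m - 1 : ℕ) : ℝ) ^ χ := by
              calc ‖S j‖ ≤ ε / 4 * (j:ℝ) ^ χ := h1
                _ ≤ ε / 4 * ((m - 1 : ℕ) : ℝ) ^ χ := by
                    apply mul_le_mul_of_nonneg_left h2 (by positivity)
            exact mul_le_mul_of_nonneg_left h3 hc0
        _ = (c (n - 1) - c (m - 1)) * (ε / 4 * ((m - 1 : ℕ) : ℝ) ^ χ) := by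
            rw [← Finset.sum_mul, telescope_aux c (n - 1) (m - 1) (by omega)]
        _ ≤ ε / 2 := by
            have hn1 : 1 ≤ n - 1 := by omega
            have hm1pos : (0:ℝ) < ((m - 1 : ℕ) : ℝ) := by
              have : 1 ≤ m - 1 := by omega
              exact_mod_cast this
            have hn1pos : (0:ℝ) < ((n - 1 : ℕ) : ℝ) := by exact_mod_cast hn1
            have hcm : 0 < c (m - 1) := hc_pos _ (by omega)
            have step1 : (c (n - 1) - c (m - 1)) * (ε / 4 * ((m - 1 : ℕ) : ℝ) ^ χ)
                ≤ c (n - 1) * (ε / 4 * ((m - 1 : ℕ) : ℝ) ^ χ) := by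
              apply mul_le_mul_of_nonneg_right (by linarith) (by positivity)
            have hmn2 : ((m - 1 : ℕ) : ℝ) ≤ 2 * ((n - 1 : ℕ) : ℝ) := by
              have : m - 1 ≤ 2 * (n - 1) := by omega
              exact_mod_cast this
            have hrat : c (n - 1) * ((m - 1 : ℕ) : ℝ) ^ χ ≤ 2 := by
              have hcn : c (n - 1) = (((n - 1 : ℕ) : ℝ) ^ χ)⁻¹ := by
                rw [hc_def]; simp only; rw [Real.rpow_neg hn1pos.le]
              rw [hcn]
              rw [inv_mul_le_iff₀ (Real.rpow_pos_of_pos hn1pos χ)]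
              calc ((m - 1 : ℕ) : ℝ) ^ χ ≤ (2 * ((n - 1 : ℕ) : ℝ)) ^ χ :=
                    Real.rpow_le_rpow (by positivity) hmn2 hχ0.le
                _ = 2 ^ χ * ((n - 1 : ℕ) : ℝ) ^ χ :=
                    Real.mul_rpow (by norm_num) hn1pos.le
                _ ≤ 2 * ((n - 1 : ℕ) : ℝ) ^ χ := by
                    apply mul_le_mul_of_nonneg_right _ (by positivity)
                    calc (2:ℝ) ^ χ ≤ 2 ^ (1:ℝ) :=
                          Real.rpow_le_rpow_of_exponent_le (by norm_num) hχ1.le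
                      _ = 2 := Real.rpow_one 2
                _ = ((n - 1 : ℕ) : ℝ) ^ χ * 2 := by ring
            calc (c (n - 1) - c (m - 1)) * (ε / 4 * ((m - 1 : ℕ) : ℝ) ^ χ)
                ≤ c (n - 1) * (ε / 4 * ((m - 1 : ℕ) : ℝ) ^ χ) := step1
              _ = (c (n - 1) * ((m - 1 : ℕ) : ℝ) ^ χ) * (ε / 4) := by ring
              _ ≤ 2 * (ε / 4) := by
                  apply mul_le_mul_of_nonneg_right hrat (by positivity)
              _ = ε / 2 := by ring
    have htri : ‖c (m - 1) • S (m - 1) - c (n - 1) • S (n - 1)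
            + ∑ j ∈ Finset.Ico (n - 1) (m - 1), (c j - c (j + 1)) • S j‖
        ≤ ‖c (m - 1) • S (m - 1)‖ + ‖c (n - 1) • S (n - 1)‖
            + ‖∑ j ∈ Finset.Ico (n - 1) (m - 1), (c j - c (j + 1)) • S j‖ := by
      refine le_trans (norm_add_le _ _) ?_
      have := norm_sub_le (c (m - 1) • S (m - 1)) (c (n - 1) • S (n - 1))
      linarith
    linarith
  exact key
end

section
/- Let χ ∈ (0,1), θ ∈ (χ,1], η̄ > 0, a > 0, and define n_k = ⌊(ak)^{1/(1−χ)}⌋ and I_k = {n_k, …, n_{k+1}−1}. Let A be a symmetric positive-definite real d×d matrix, {Â_l} symmetric positive-semidefinite d×d matrices with ‖n^{-χ} Σ_{l=1}^n (Â_l − A)‖ → 0 as n → ∞, and {η_l} real numbers with 0 ≤ η_l ≤ η̄ l^{-θ}. Then the sequence Σ_{l∈I_k} (l^{-χ}‖Â_l‖ + η_l), k = 0,1,2,…, is bounded. -/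
open Filter Finset
open scoped RealInnerProductSpace Topology
set_option maxHeartbeats 1000000
set_option synthInstance.maxHeartbeats 400000

variable {d : ℕ}

noncomputable def trE (d : ℕ) (M : EuclideanSpace ℝ (Fin d) →L[ℝ] EuclideanSpace ℝ (Fin d)) : ℝ :=
  ∑ i : Fin d, ⟪M (EuclideanSpace.single i 1), EuclideanSpace.single i 1⟫

lemma trE_le (M : EuclideanSpace ℝ (Fin d) →L[ℝ] EuclideanSpace ℝ (Fin d)) :
    trE d M ≤ d * ‖M‖ := by
  have h : ∀ i : Fin d, ⟪M (EuclideanSpace.single i 1), EuclideanSpace.single i 1⟫ ≤ ‖M‖ := by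
    intro i
    have hn : ‖(EuclideanSpace.single i (1:ℝ))‖ = 1 := by
      simp [EuclideanSpace.norm_single]
    calc ⟪M (EuclideanSpace.single i 1), EuclideanSpace.single i 1⟫
        ≤ ‖M (EuclideanSpace.single i (1:ℝ))‖ * ‖(EuclideanSpace.single i (1:ℝ))‖ :=
          real_inner_le_norm _ _
      _ ≤ ‖M‖ * ‖(EuclideanSpace.single i (1:ℝ))‖ * ‖(EuclideanSpace.single i (1:ℝ))‖ := by
          exact mul_le_mul_of_nonneg_right (M.le_opNorm _) (norm_nonneg _)
      _ = ‖M‖ := by rw [hn]; ring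
  calc trE d M ≤ ∑ _i : Fin d, ‖M‖ := Finset.sum_le_sum (fun i _ => h i)
    _ = d * ‖M‖ := by rw [Finset.sum_const, Finset.card_univ, Fintype.card_fin, nsmul_eq_mul]

lemma psd_cs (P : EuclideanSpace ℝ (Fin d) →L[ℝ] EuclideanSpace ℝ (Fin d))
    (hsym : ∀ x y : EuclideanSpace ℝ (Fin d), ⟪P x, y⟫ = ⟪x, P y⟫)
    (hpsd : ∀ x : EuclideanSpace ℝ (Fin d), 0 ≤ ⟪P x, x⟫)
    (x y : EuclideanSpace ℝ (Fin d)) : ⟪P x, y⟫ ^ 2 ≤ ⟪P x, x⟫ * ⟪P y, y⟫ := by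
  have key : ∀ t : ℝ, 0 ≤ ⟪P y, y⟫ * (t * t) + (2 * ⟪P x, y⟫) * t + ⟪P x, x⟫ := by
    intro t
    have h0 := hpsd (x + t • y)
    have hPyx : ⟪P y, x⟫ = ⟪P x, y⟫ := by
      rw [hsym y x, real_inner_comm]
    calc (0:ℝ) ≤ ⟪P (x + t • y), x + t • y⟫ := h0
      _ = ⟪P y, y⟫ * (t * t) + (2 * ⟪P x, y⟫) * t + ⟪P x, x⟫ := by
        simp [map_add, map_smul, inner_add_add_self, inner_add_left, inner_add_right,
          inner_smul_left, inner_smul_right, hPyx]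
        ring
  have hd := discrim_le_zero key
  rw [discrim] at hd
  nlinarith [hd]

lemma norm_le_trE (P : EuclideanSpace ℝ (Fin d) →L[ℝ] EuclideanSpace ℝ (Fin d))
    (hsym : ∀ x y : EuclideanSpace ℝ (Fin d), ⟪P x, y⟫ = ⟪x, P y⟫)
    (hpsd : ∀ x : EuclideanSpace ℝ (Fin d), 0 ≤ ⟪P x, x⟫) : ‖P‖ ≤ trE d P := by
  have hT0 : 0 ≤ trE d P := Finset.sum_nonneg (fun i _ => hpsd _)
  have expand : ∀ u : EuclideanSpace ℝ (Fin d),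
      ‖u‖ ^ 2 = ∑ i : Fin d, ⟪u, EuclideanSpace.single i 1⟫ ^ 2 := by
    intro u
    rw [← real_inner_self_eq_norm_sq, PiLp.inner_apply]
    refine Finset.sum_congr rfl (fun i _ => ?_)
    rw [EuclideanSpace.inner_single_right]
    simp [RCLike.inner_apply, sq]
  have key : ∀ x : EuclideanSpace ℝ (Fin d),
      ‖P x‖ ^ 2 ≤ (‖P‖ * trE d P) * ‖x‖ ^ 2 := by
    intro x
    rw [expand (P x)]
    have step : ∀ i : Fin d, ⟪P x, EuclideanSpace.single i 1⟫ ^ 2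
        ≤ (‖P‖ * ‖x‖ ^ 2) * ⟪P (EuclideanSpace.single i 1), EuclideanSpace.single i 1⟫ := by
      intro i
      have h1 := psd_cs P hsym hpsd x (EuclideanSpace.single i 1)
      have h2 : ⟪P x, x⟫ ≤ ‖P‖ * ‖x‖ ^ 2 := by
        calc ⟪P x, x⟫ ≤ ‖P x‖ * ‖x‖ := real_inner_le_norm _ _
          _ ≤ ‖P‖ * ‖x‖ * ‖x‖ := mul_le_mul_of_nonneg_right (P.le_opNorm _) (norm_nonneg _)
          _ = ‖P‖ * ‖x‖ ^ 2 := by ring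
      nlinarith [hpsd (EuclideanSpace.single i (1:ℝ)), hpsd x]
    calc (∑ i : Fin d, ⟪P x, EuclideanSpace.single i 1⟫ ^ 2)
        ≤ ∑ i : Fin d, (‖P‖ * ‖x‖ ^ 2) * ⟪P (EuclideanSpace.single i 1), EuclideanSpace.single i 1⟫ :=
          Finset.sum_le_sum (fun i _ => step i)
      _ = (‖P‖ * trE d P) * ‖x‖ ^ 2 := by rw [← Finset.mul_sum, trE]; ring
  have hbd : ‖P‖ ≤ Real.sqrt (‖P‖ * trE d P) := by
    refine P.opNorm_le_bound (Real.sqrt_nonneg _) (fun x => ?_)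
    have h := key x
    have h2 : ‖P x‖ ^ 2 ≤ (Real.sqrt (‖P‖ * trE d P) * ‖x‖) ^ 2 := by
      rw [mul_pow, Real.sq_sqrt (by positivity)]
      exact h
    calc ‖P x‖ = Real.sqrt (‖P x‖ ^ 2) := (Real.sqrt_sq (norm_nonneg _)).symm
      _ ≤ Real.sqrt ((Real.sqrt (‖P‖ * trE d P) * ‖x‖) ^ 2) := Real.sqrt_le_sqrt h2
      _ = Real.sqrt (‖P‖ * trE d P) * ‖x‖ := Real.sqrt_sq (by positivity)
  have hsq : ‖P‖ ^ 2 ≤ ‖P‖ * trE d P := by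
    have := Real.sq_sqrt (show (0:ℝ) ≤ ‖P‖ * trE d P by positivity)
    nlinarith [Real.sqrt_nonneg (‖P‖ * trE d P), norm_nonneg P]
  rcases eq_or_lt_of_le (norm_nonneg P) with h0 | h0
  · linarith
  · nlinarith

lemma rpow_mvt {e : ℝ} (he : 1 ≤ e) {x y : ℝ} (hx : 0 ≤ x) (hxy : x ≤ y) :
    y ^ e - x ^ e ≤ e * y ^ (e - 1) * (y - x) := by
  rcases eq_or_lt_of_le hxy with h | hlt
  · subst h; simp
  · have hcont : ContinuousOn (fun t : ℝ => t ^ e) (Set.Icc x y) := by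
      intro t _
      exact (Real.continuousAt_rpow_const t e (Or.inr (by linarith))).continuousWithinAt
    have hderiv : ∀ t ∈ Set.Ioo x y, HasDerivAt (fun t : ℝ => t ^ e) (e * t ^ (e - 1)) t := by
      intro t _
      exact Real.hasDerivAt_rpow_const (Or.inr he)
    obtain ⟨c, hc, hc'⟩ := exists_hasDerivAt_eq_slope (fun t : ℝ => t ^ e)
      (fun t => e * t ^ (e - 1)) hlt hcont hderiv
    have hc0 : 0 ≤ c := le_of_lt (lt_of_le_of_lt hx hc.1)
    have hcy : c ≤ y := le_of_lt hc.2
    have hmono : c ^ (e - 1) ≤ y ^ (e - 1) :=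
      Real.rpow_le_rpow hc0 hcy (by linarith)
    have heq : y ^ e - x ^ e = e * c ^ (e - 1) * (y - x) := by
      have hne : y - x ≠ 0 := by linarith
      rw [eq_div_iff hne] at hc'
      linarith
    rw [heq]
    have : 0 ≤ y - x := by linarith
    have he0 : (0:ℝ) ≤ e := by linarith
    exact mul_le_mul_of_nonneg_right (mul_le_mul_of_nonneg_left hmono he0) this

lemma floor_est {χ a : ℝ} (hχ0 : 0 < χ) (hχ1 : χ < 1) (ha : 0 < a) :
    ∃ k₀ : ℕ, ∀ k : ℕ, k₀ ≤ k →
      (1 ≤ ⌊(a * k) ^ (1 / (1 - χ))⌋₊ ∧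
       ⌊(a * k) ^ (1 / (1 - χ))⌋₊ ≤ ⌊(a * ((k:ℝ) + 1)) ^ (1 / (1 - χ))⌋₊) ∧
      ((⌊(a * ((k:ℝ) + 1)) ^ (1 / (1 - χ))⌋₊ : ℝ)) ^ χ * ((⌊(a * k) ^ (1 / (1 - χ))⌋₊ : ℝ)) ^ (-χ)
        ≤ ((2:ℝ) ^ ((1 / (1 - χ)) + 1)) ^ χ ∧
      ((⌊(a * ((k:ℝ) + 1)) ^ (1 / (1 - χ))⌋₊ : ℝ) - (⌊(a * k) ^ (1 / (1 - χ))⌋₊ : ℝ))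
          * ((⌊(a * k) ^ (1 / (1 - χ))⌋₊ : ℝ)) ^ (-χ)
        ≤ a * (1 / (1 - χ)) * ((2:ℝ) ^ ((1 / (1 - χ)) + 1)) ^ χ + 1 := by
  set e : ℝ := 1 / (1 - χ) with he_def
  have h1χ : 0 < 1 - χ := by linarith
  have he1 : 1 ≤ e := by
    rw [he_def, le_div_iff₀ h1χ]; linarith
  have he0 : 0 < e := by linarith
  refine ⟨max 1 ⌈2 / a⌉₊, fun k hk => ?_⟩
  have hk1 : 1 ≤ k := le_trans (le_max_left _ _) hk
  have hk2a : (2:ℝ) ≤ a * k := by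
    have h1 : (⌈2 / a⌉₊ : ℝ) ≤ k := Nat.cast_le.mpr (le_trans (le_max_right _ _) hk)
    have h2 : 2 / a ≤ (k:ℝ) := le_trans (Nat.le_ceil _) h1
    rw [div_le_iff₀ ha] at h2
    linarith [h2]
  have hak0 : (0:ℝ) ≤ a * k := by linarith
  have hkc0 : (0:ℝ) ≤ (k:ℝ) := Nat.cast_nonneg k
  have hak10 : (0:ℝ) ≤ a * ((k:ℝ) + 1) := by nlinarith
  set m : ℕ := ⌊(a * k) ^ e⌋₊ with hm_def
  set M : ℕ := ⌊(a * ((k:ℝ) + 1)) ^ e⌋₊ with hM_def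
  set gk : ℝ := (a * k) ^ e with hgk
  set gk1 : ℝ := (a * ((k:ℝ) + 1)) ^ e with hgk1
  have hgk2 : 2 ≤ gk := by
    calc (2:ℝ) ≤ a * k := hk2a
      _ = (a * k) ^ (1:ℝ) := (Real.rpow_one _).symm
      _ ≤ gk := Real.rpow_le_rpow_of_exponent_le (by linarith) he1
  have hm_low : gk - 1 < m := Nat.sub_one_lt_floor _
  have hm_half : gk / 2 ≤ (m:ℝ) := by linarith
  have hm1R : (1:ℝ) ≤ m := by linarith
  have hm1 : 1 ≤ m := Nat.one_le_cast.mp hm1R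
  have hmpos : (0:ℝ) < m := by linarith
  have hmM : m ≤ M := by
    apply Nat.floor_le_floor
    apply Real.rpow_le_rpow hak0 _ (le_of_lt he0)
    nlinarith
  have hM_up : (M:ℝ) ≤ gk1 := Nat.floor_le (Real.rpow_nonneg hak10 _)
  have hg1_bound : gk1 ≤ 2 ^ e * gk := by
    have h1 : a * ((k:ℝ) + 1) ≤ 2 * (a * k) := by
      have : (1:ℝ) ≤ k := Nat.one_le_cast.mpr hk1
      nlinarith
    calc gk1 ≤ (2 * (a * k)) ^ e :=
          Real.rpow_le_rpow hak10 h1 (le_of_lt he0)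
      _ = 2 ^ e * gk := Real.mul_rpow (by norm_num) hak0
  have h2e : (2:ℝ) ^ (e + 1) = 2 ^ e * 2 := by
    rw [Real.rpow_add (by norm_num), Real.rpow_one]
  have hg1m : gk1 ≤ 2 ^ (e + 1) * m := by
    rw [h2e]
    calc gk1 ≤ 2 ^ e * gk := hg1_bound
      _ ≤ 2 ^ e * (2 * m) := by
          have h2e0 : (0:ℝ) ≤ 2 ^ e := Real.rpow_nonneg (by norm_num) _
          have : gk ≤ 2 * m := by linarith
          nlinarith
      _ = 2 ^ e * 2 * m := by ring
  have hMm : (M:ℝ) ≤ 2 ^ (e + 1) * m := le_trans hM_up hg1m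
  have hmm1 : (m:ℝ) ^ χ * (m:ℝ) ^ (-χ) = 1 := by
    rw [← Real.rpow_add hmpos]; simp
  have hminv0 : (0:ℝ) ≤ (m:ℝ) ^ (-χ) := Real.rpow_nonneg (le_of_lt hmpos) _
  have hminv1 : (m:ℝ) ^ (-χ) ≤ 1 :=
    Real.rpow_le_one_of_one_le_of_nonpos hm1R (by linarith)
  have hc1 : ((M:ℝ)) ^ χ ≤ ((2:ℝ) ^ (e + 1)) ^ χ * (m:ℝ) ^ χ := by
    calc ((M:ℝ)) ^ χ ≤ (2 ^ (e + 1) * m) ^ χ :=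
        Real.rpow_le_rpow (Nat.cast_nonneg _) hMm (le_of_lt hχ0)
      _ = ((2:ℝ) ^ (e + 1)) ^ χ * (m:ℝ) ^ χ :=
        Real.mul_rpow (Real.rpow_nonneg (by norm_num) _) (Nat.cast_nonneg _)
  have hc1' : ((M:ℝ)) ^ χ * (m:ℝ) ^ (-χ) ≤ ((2:ℝ) ^ (e + 1)) ^ χ := by
    calc ((M:ℝ)) ^ χ * (m:ℝ) ^ (-χ)
        ≤ (((2:ℝ) ^ (e + 1)) ^ χ * (m:ℝ) ^ χ) * (m:ℝ) ^ (-χ) :=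
          mul_le_mul_of_nonneg_right hc1 hminv0
      _ = ((2:ℝ) ^ (e + 1)) ^ χ * ((m:ℝ) ^ χ * (m:ℝ) ^ (-χ)) := by ring
      _ = ((2:ℝ) ^ (e + 1)) ^ χ := by rw [hmm1, mul_one]
  -- difference bound
  have hmvt : gk1 - gk ≤ e * (a * ((k:ℝ) + 1)) ^ (e - 1) * a := by
    have h := rpow_mvt he1 hak0 (show a * (k:ℝ) ≤ a * ((k:ℝ) + 1) by nlinarith)
    have : a * ((k:ℝ) + 1) - a * k = a := by ring
    rw [this] at h
    exact h
  have hexp : (a * ((k:ℝ) + 1)) ^ (e - 1) = gk1 ^ χ := by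
    have h1 : e - 1 = e * χ := by
      rw [he_def]; field_simp; ring
    rw [h1, Real.rpow_mul hak10]
  have hdiff : (M:ℝ) - m ≤ a * e * (((2:ℝ) ^ (e + 1)) ^ χ * (m:ℝ) ^ χ) + 1 := by
    have h1 : gk1 ^ χ ≤ ((2:ℝ) ^ (e + 1)) ^ χ * (m:ℝ) ^ χ := by
      calc gk1 ^ χ ≤ (2 ^ (e + 1) * m) ^ χ :=
          Real.rpow_le_rpow (Real.rpow_nonneg hak10 _) hg1m (le_of_lt hχ0)
        _ = ((2:ℝ) ^ (e + 1)) ^ χ * (m:ℝ) ^ χ :=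
          Real.mul_rpow (Real.rpow_nonneg (by norm_num) _) (Nat.cast_nonneg _)
    have h2 : (M:ℝ) - m ≤ (gk1 - gk) + 1 := by linarith
    have h3 : gk1 - gk ≤ e * (((2:ℝ) ^ (e + 1)) ^ χ * (m:ℝ) ^ χ) * a := by
      calc gk1 - gk ≤ e * (a * ((k:ℝ) + 1)) ^ (e - 1) * a := hmvt
        _ = e * gk1 ^ χ * a := by rw [hexp]
        _ ≤ e * (((2:ℝ) ^ (e + 1)) ^ χ * (m:ℝ) ^ χ) * a := mul_le_mul_of_nonneg_right (mul_le_mul_of_nonneg_left h1 (le_of_lt he0)) (le_of_lt ha)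
    nlinarith [h3]
  have hdiff' : ((M:ℝ) - m) * (m:ℝ) ^ (-χ) ≤ a * e * ((2:ℝ) ^ (e + 1)) ^ χ + 1 := by
    have hMm' : (0:ℝ) ≤ (M:ℝ) - m := by
      have := (Nat.cast_le (α := ℝ)).mpr hmM; linarith
    calc ((M:ℝ) - m) * (m:ℝ) ^ (-χ)
        ≤ (a * e * (((2:ℝ) ^ (e + 1)) ^ χ * (m:ℝ) ^ χ) + 1) * (m:ℝ) ^ (-χ) :=
          mul_le_mul_of_nonneg_right hdiff hminv0
      _ = a * e * ((2:ℝ) ^ (e + 1)) ^ χ * ((m:ℝ) ^ χ * (m:ℝ) ^ (-χ)) + (m:ℝ) ^ (-χ) := by ring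
      _ = a * e * ((2:ℝ) ^ (e + 1)) ^ χ + (m:ℝ) ^ (-χ) := by rw [hmm1, mul_one]
      _ ≤ a * e * ((2:ℝ) ^ (e + 1)) ^ χ + 1 := by linarith
  exact ⟨⟨hm1, hmM⟩, hc1', hdiff'⟩
section Main
variable {d : ℕ}

lemma trE_sum (s : Finset ℕ) (F : ℕ → (EuclideanSpace ℝ (Fin d) →L[ℝ] EuclideanSpace ℝ (Fin d))) :
    trE d (∑ l ∈ s, F l) = ∑ l ∈ s, trE d (F l) := by
  unfold trE
  rw [Finset.sum_comm]
  refine Finset.sum_congr rfl (fun i _ => ?_)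
  rw [ContinuousLinearMap.sum_apply, sum_inner]

/-- Lemma 2 iv): with blocks `I_k = {n_k, …, n_{k+1}−1}`, `n_k = ⌊(ak)^{1/(1−χ)}⌋`,
the sequence `Σ_{l∈I_k} (l^{-χ}‖Â_l‖ + η_l)` is bounded. -/
theorem stmt_10 (d : ℕ) (hd : 0 < d) (χ θ η' a : ℝ) (hχ : χ ∈ Set.Ioo (0 : ℝ) 1)
    (hθ : θ ∈ Set.Ioc χ 1) (hη' : 0 < η') (ha : 0 < a)
    (A : EuclideanSpace ℝ (Fin d) →L[ℝ] EuclideanSpace ℝ (Fin d))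
    (hAsym : ∀ x y : EuclideanSpace ℝ (Fin d), ⟪A x, y⟫ = ⟪x, A y⟫)
    (hApos : ∀ x : EuclideanSpace ℝ (Fin d), x ≠ 0 → 0 < ⟪A x, x⟫)
    (Ah : ℕ → EuclideanSpace ℝ (Fin d) →L[ℝ] EuclideanSpace ℝ (Fin d))
    (hAhsym : ∀ (l : ℕ) (x y : EuclideanSpace ℝ (Fin d)), ⟪Ah l x, y⟫ = ⟪x, Ah l y⟫)
    (hAhpsd : ∀ (l : ℕ) (x : EuclideanSpace ℝ (Fin d)), 0 ≤ ⟪Ah l x, x⟫)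
    (hcoefA : Tendsto (fun n : ℕ => ‖(n : ℝ) ^ (-χ) • ∑ l ∈ Icc 1 n, (Ah l - A)‖)
      atTop (𝓝 0))
    (η : ℕ → ℝ) (hη : ∀ l : ℕ, 1 ≤ l → 0 ≤ η l ∧ η l ≤ η' * (l : ℝ) ^ (-θ)) :
    ∃ K : ℝ, ∀ k : ℕ,
      ∑ l ∈ Ico (⌊(a * k) ^ (1 / (1 - χ))⌋₊) (⌊(a * (k + 1)) ^ (1 / (1 - χ))⌋₊),
        ((l : ℝ) ^ (-χ) * ‖Ah l‖ + η l) ≤ K := by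
  obtain ⟨hχ0, hχ1⟩ := hχ
  obtain ⟨hθχ, hθ1⟩ := hθ
  -- the uniform constant C for the averaged sums
  obtain ⟨C₀, hC₀⟩ := hcoefA.bddAbove_range
  set C := max C₀ 0 with hC_def
  have hC0 : (0:ℝ) ≤ C := le_max_right _ _
  have hDn : ∀ n : ℕ, ‖∑ l ∈ Icc 1 n, (Ah l - A)‖ ≤ C * (n:ℝ) ^ χ := by
    intro n
    rcases Nat.eq_zero_or_pos n with h | h
    · subst h
      rw [show Finset.Icc 1 0 = (∅ : Finset ℕ) from rfl, Finset.sum_empty, norm_zero,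
        Nat.cast_zero, Real.zero_rpow (ne_of_gt hχ0), mul_zero]
    · have hs : ‖((n:ℝ)) ^ (-χ) • ∑ l ∈ Icc 1 n, (Ah l - A)‖ ≤ C₀ :=
        hC₀ (Set.mem_range_self n)
      have hnpos : (0:ℝ) < (n:ℝ) := by exact_mod_cast h
      have hnorm : ‖((n:ℝ)) ^ (-χ) • ∑ l ∈ Icc 1 n, (Ah l - A)‖
          = (n:ℝ) ^ (-χ) * ‖∑ l ∈ Icc 1 n, (Ah l - A)‖ := by
        rw [norm_smul ((n:ℝ) ^ (-χ)) (∑ l ∈ Finset.Icc 1 n, (Ah l - A)), Real.norm_eq_abs,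
          abs_of_nonneg (Real.rpow_nonneg (le_of_lt hnpos) _)]
      have hmul : (n:ℝ) ^ χ * (n:ℝ) ^ (-χ) = 1 := by
        rw [← Real.rpow_add hnpos]; simp
      have hχn0 : (0:ℝ) ≤ (n:ℝ) ^ χ := Real.rpow_nonneg (le_of_lt hnpos) _
      calc ‖∑ l ∈ Icc 1 n, (Ah l - A)‖
          = ((n:ℝ) ^ χ * (n:ℝ) ^ (-χ)) * ‖∑ l ∈ Icc 1 n, (Ah l - A)‖ := by
            rw [hmul, one_mul]
        _ = (n:ℝ) ^ χ * ((n:ℝ) ^ (-χ) * ‖∑ l ∈ Icc 1 n, (Ah l - A)‖) := by ring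
        _ ≤ (n:ℝ) ^ χ * C₀ := by
            rw [← hnorm]
            exact mul_le_mul_of_nonneg_left hs hχn0
        _ ≤ C * (n:ℝ) ^ χ := by
            have : C₀ ≤ C := le_max_left _ _
            nlinarith
  have hIco : ∀ n : ℕ, ‖∑ l ∈ Ico 1 n, (Ah l - A)‖ ≤ C * (n:ℝ) ^ χ := by
    intro n
    rcases Nat.eq_zero_or_pos n with h | h
    · subst h
      rw [show Finset.Ico 1 0 = (∅ : Finset ℕ) from rfl, Finset.sum_empty, norm_zero,
        Nat.cast_zero, Real.zero_rpow (ne_of_gt hχ0), mul_zero]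
    · have he : Ico 1 n = Icc 1 (n - 1) := by
        rw [← Finset.Ico_add_one_right_eq_Icc]
        congr 1
        omega
      rw [he]
      calc ‖∑ l ∈ Icc 1 (n-1), (Ah l - A)‖ ≤ C * ((n-1:ℕ):ℝ) ^ χ := hDn _
        _ ≤ C * (n:ℝ) ^ χ := by
            apply mul_le_mul_of_nonneg_left _ hC0
            exact Real.rpow_le_rpow (Nat.cast_nonneg _)
              (Nat.cast_le.mpr (Nat.sub_le _ _)) (le_of_lt hχ0)
  -- block bound for the sum of operator norms
  have hblock : ∀ m M : ℕ, 1 ≤ m → m ≤ M →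
      ∑ l ∈ Ico m M, ‖Ah l‖
        ≤ d * (C * (M:ℝ) ^ χ + C * (m:ℝ) ^ χ + ((M:ℝ) - (m:ℝ)) * ‖A‖) := by
    intro m M hm hmM
    have hsplit : ∑ l ∈ Ico m M, (Ah l - A)
        = (∑ l ∈ Ico 1 M, (Ah l - A)) - (∑ l ∈ Ico 1 m, (Ah l - A)) := by
      rw [← Finset.sum_Ico_consecutive (fun l => Ah l - A) hm hmM]
      abel
    have hdecomp : ∑ l ∈ Ico m M, Ah l
        = (∑ l ∈ Ico m M, (Ah l - A)) + (M - m) • A := by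
      rw [Finset.sum_sub_distrib, Finset.sum_const, Nat.card_Ico]
      abel
    have hcast : ((M - m : ℕ) : ℝ) = (M:ℝ) - (m:ℝ) := by
      rw [Nat.cast_sub hmM]
    have hnsmul : ‖(M - m) • A‖ = ((M:ℝ) - (m:ℝ)) * ‖A‖ := by
      rw [← Nat.cast_smul_eq_nsmul ℝ, norm_smul, Real.norm_eq_abs,
        abs_of_nonneg (by positivity), hcast]
    have t3 : ‖∑ l ∈ Ico m M, Ah l‖
        ≤ C * (M:ℝ) ^ χ + C * (m:ℝ) ^ χ + ((M:ℝ) - (m:ℝ)) * ‖A‖ := by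
      rw [hdecomp]
      calc ‖(∑ l ∈ Ico m M, (Ah l - A)) + (M - m) • A‖
          ≤ ‖∑ l ∈ Ico m M, (Ah l - A)‖ + ‖(M - m) • A‖ := norm_add_le _ _
        _ ≤ (‖∑ l ∈ Ico 1 M, (Ah l - A)‖ + ‖∑ l ∈ Ico 1 m, (Ah l - A)‖)
              + ((M:ℝ) - (m:ℝ)) * ‖A‖ := by
            rw [hsplit, hnsmul]
            exact add_le_add_left (norm_sub_le _ _) _
        _ ≤ (C * (M:ℝ) ^ χ + C * (m:ℝ) ^ χ) + ((M:ℝ) - (m:ℝ)) * ‖A‖ := by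
            exact add_le_add_left (add_le_add (hIco M) (hIco m)) _
        _ = C * (M:ℝ) ^ χ + C * (m:ℝ) ^ χ + ((M:ℝ) - (m:ℝ)) * ‖A‖ := by ring
    calc ∑ l ∈ Ico m M, ‖Ah l‖
        ≤ ∑ l ∈ Ico m M, trE d (Ah l) :=
          Finset.sum_le_sum (fun l _ => norm_le_trE (Ah l) (hAhsym l) (hAhpsd l))
      _ = trE d (∑ l ∈ Ico m M, Ah l) := (trE_sum _ _).symm
      _ ≤ d * ‖∑ l ∈ Ico m M, Ah l‖ := trE_le _
      _ ≤ d * (C * (M:ℝ) ^ χ + C * (m:ℝ) ^ χ + ((M:ℝ) - (m:ℝ)) * ‖A‖) := by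
          exact mul_le_mul_of_nonneg_left t3 (Nat.cast_nonneg d)
  -- floor estimates
  obtain ⟨k₀, hk₀⟩ := floor_est hχ0 hχ1 ha
  set e : ℝ := 1 / (1 - χ) with he_def
  set c1 : ℝ := ((2:ℝ) ^ (e + 1)) ^ χ with hc1_def
  set c2 : ℝ := a * e * c1 + 1 with hc2_def
  have hc1nn : 0 ≤ c1 := Real.rpow_nonneg (Real.rpow_nonneg (by norm_num) _) _
  have he0 : 0 < e := by
    rw [he_def]
    have h1χ : 0 < 1 - χ := by linarith
    positivity
  have hc2nn : 0 ≤ c2 := by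
    rw [hc2_def]; positivity
  set B : ℝ := (d:ℝ) * C * c1 + (d:ℝ) * C + ((d:ℝ) * ‖A‖ + η') * c2 with hB_def
  have hBnn : 0 ≤ B := by
    rw [hB_def]; positivity
  -- eventual bound
  have hev : ∀ k : ℕ, k₀ ≤ k →
      ∑ l ∈ Ico (⌊(a * k) ^ (1 / (1 - χ))⌋₊) (⌊(a * ((k:ℝ) + 1)) ^ (1 / (1 - χ))⌋₊),
        ((l : ℝ) ^ (-χ) * ‖Ah l‖ + η l) ≤ B := by
    intro k hk
    obtain ⟨⟨hm1, hmM⟩, hH1, hH2⟩ := hk₀ k hk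
    set m : ℕ := ⌊(a * k) ^ (1 / (1 - χ))⌋₊ with hm_def
    set M : ℕ := ⌊(a * ((k:ℝ) + 1)) ^ (1 / (1 - χ))⌋₊ with hM_def
    have hm1R : (1:ℝ) ≤ (m:ℝ) := Nat.one_le_cast.mpr hm1
    have hmposR : (0:ℝ) < (m:ℝ) := by linarith
    have hminv0 : (0:ℝ) ≤ (m:ℝ) ^ (-χ) := Real.rpow_nonneg (le_of_lt hmposR) _
    have hmm1 : (m:ℝ) ^ χ * (m:ℝ) ^ (-χ) = 1 := by
      rw [← Real.rpow_add hmposR]; simp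
    -- per-term bound
    have hterm : ∀ l ∈ Ico m M,
        (l : ℝ) ^ (-χ) * ‖Ah l‖ + η l ≤ (m:ℝ) ^ (-χ) * ‖Ah l‖ + η' * (m:ℝ) ^ (-χ) := by
      intro l hl
      obtain ⟨hlm, _⟩ := Finset.mem_Ico.mp hl
      have hl1 : 1 ≤ l := le_trans hm1 hlm
      have hl1R : (1:ℝ) ≤ (l:ℝ) := Nat.one_le_cast.mpr hl1
      have hlmR : (m:ℝ) ≤ (l:ℝ) := Nat.cast_le.mpr hlm
      have h1 : (l:ℝ) ^ (-χ) ≤ (m:ℝ) ^ (-χ) :=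
        Real.rpow_le_rpow_of_nonpos hmposR hlmR (by linarith)
      have h2 : η l ≤ η' * (m:ℝ) ^ (-χ) := by
        have hηl := (hη l hl1).2
        have h3 : (l:ℝ) ^ (-θ) ≤ (l:ℝ) ^ (-χ) :=
          Real.rpow_le_rpow_of_exponent_le hl1R (by linarith)
        calc η l ≤ η' * (l:ℝ) ^ (-θ) := hηl
          _ ≤ η' * (l:ℝ) ^ (-χ) := mul_le_mul_of_nonneg_left h3 (le_of_lt hη')
          _ ≤ η' * (m:ℝ) ^ (-χ) := mul_le_mul_of_nonneg_left h1 (le_of_lt hη')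
      have h4 : (l:ℝ) ^ (-χ) * ‖Ah l‖ ≤ (m:ℝ) ^ (-χ) * ‖Ah l‖ :=
        mul_le_mul_of_nonneg_right h1 (norm_nonneg _)
      linarith
    have hcard : ((Ico m M).card : ℝ) = (M:ℝ) - (m:ℝ) := by
      rw [Nat.card_Ico, Nat.cast_sub hmM]
    calc ∑ l ∈ Ico m M, ((l : ℝ) ^ (-χ) * ‖Ah l‖ + η l)
        ≤ ∑ l ∈ Ico m M, ((m:ℝ) ^ (-χ) * ‖Ah l‖ + η' * (m:ℝ) ^ (-χ)) :=
          Finset.sum_le_sum hterm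
      _ = (m:ℝ) ^ (-χ) * (∑ l ∈ Ico m M, ‖Ah l‖)
            + ((M:ℝ) - (m:ℝ)) * (η' * (m:ℝ) ^ (-χ)) := by
          rw [Finset.sum_add_distrib, ← Finset.mul_sum, Finset.sum_const, ← hcard,
            nsmul_eq_mul]
      _ ≤ (m:ℝ) ^ (-χ) * ((d:ℝ) * (C * (M:ℝ) ^ χ + C * (m:ℝ) ^ χ + ((M:ℝ) - (m:ℝ)) * ‖A‖))
            + ((M:ℝ) - (m:ℝ)) * (η' * (m:ℝ) ^ (-χ)) := by
          exact add_le_add_left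
            (mul_le_mul_of_nonneg_left (hblock m M hm1 hmM) hminv0) _
      _ = (d:ℝ) * C * ((M:ℝ) ^ χ * (m:ℝ) ^ (-χ))
            + (d:ℝ) * C * ((m:ℝ) ^ χ * (m:ℝ) ^ (-χ))
            + ((d:ℝ) * ‖A‖ + η') * (((M:ℝ) - (m:ℝ)) * (m:ℝ) ^ (-χ)) := by ring
      _ ≤ (d:ℝ) * C * c1 + (d:ℝ) * C * 1 + ((d:ℝ) * ‖A‖ + η') * c2 := by
          have hdC : (0:ℝ) ≤ (d:ℝ) * C := by positivity
          have hdA : (0:ℝ) ≤ (d:ℝ) * ‖A‖ + η' := by positivity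
          have g1 : (d:ℝ) * C * ((M:ℝ) ^ χ * (m:ℝ) ^ (-χ)) ≤ (d:ℝ) * C * c1 :=
            mul_le_mul_of_nonneg_left hH1 hdC
          have g2 : ((d:ℝ) * ‖A‖ + η') * (((M:ℝ) - (m:ℝ)) * (m:ℝ) ^ (-χ))
              ≤ ((d:ℝ) * ‖A‖ + η') * c2 := mul_le_mul_of_nonneg_left hH2 hdA
          rw [hmm1]
          linarith
      _ = B := by rw [hB_def]; ring
  -- combine with the finitely many initial terms
  refine ⟨B + ∑ j ∈ Finset.range k₀,
    |∑ l ∈ Ico (⌊(a * j) ^ (1 / (1 - χ))⌋₊) (⌊(a * ((j:ℝ) + 1)) ^ (1 / (1 - χ))⌋₊),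
      ((l : ℝ) ^ (-χ) * ‖Ah l‖ + η l)|, fun k => ?_⟩
  have habs_nn : (0:ℝ) ≤ ∑ j ∈ Finset.range k₀,
      |∑ l ∈ Ico (⌊(a * j) ^ (1 / (1 - χ))⌋₊) (⌊(a * ((j:ℝ) + 1)) ^ (1 / (1 - χ))⌋₊),
        ((l : ℝ) ^ (-χ) * ‖Ah l‖ + η l)| :=
    Finset.sum_nonneg (fun j _ => abs_nonneg _)
  rcases le_or_gt k₀ k with h | h
  · have := hev k h
    push_cast at this ⊢
    linarith
  · have hmem : k ∈ Finset.range k₀ := Finset.mem_range.mpr h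
    have hle1 := Finset.single_le_sum
      (f := fun j : ℕ => |∑ l ∈ Ico (⌊(a * j) ^ (1 / (1 - χ))⌋₊)
        (⌊(a * ((j:ℝ) + 1)) ^ (1 / (1 - χ))⌋₊), ((l : ℝ) ^ (-χ) * ‖Ah l‖ + η l)|)
      (fun j _ => abs_nonneg _) hmem
    have hle : ∑ l ∈ Ico (⌊(a * k) ^ (1 / (1 - χ))⌋₊) (⌊(a * ((k:ℝ) + 1)) ^ (1 / (1 - χ))⌋₊),
        ((l : ℝ) ^ (-χ) * ‖Ah l‖ + η l)
        ≤ ∑ j ∈ Finset.range k₀,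
          |∑ l ∈ Ico (⌊(a * j) ^ (1 / (1 - χ))⌋₊) (⌊(a * ((j:ℝ) + 1)) ^ (1 / (1 - χ))⌋₊),
            ((l : ℝ) ^ (-χ) * ‖Ah l‖ + η l)| :=
      le_trans (le_abs_self _) hle1
    push_cast at hle ⊢
    linarith
end Main
end

section
/- Let m be a positive integer and {M_k, k = 1,2,3,…} a sequence of symmetric positive-semidefinite real m×m matrices. Then Σ_{k=1}^{j} ‖M_k‖_F ≤ √m ‖Σ_{k=1}^{j} M_k‖_F for every j ≥ 1, where ‖·‖_F denotes the Frobenius norm. -/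
open Finset

/-- The Frobenius norm of a real `m × m` matrix. -/
noncomputable def frobNorm {m : ℕ} (A : Matrix (Fin m) (Fin m) ℝ) : ℝ :=
  Real.sqrt (∑ n : Fin m, ∑ o : Fin m, (A n o) ^ 2)

lemma aux_diag_nn {m : ℕ} {A : Matrix (Fin m) (Fin m) ℝ} (hA : A.PosSemidef) (i : Fin m) :
    0 ≤ A i i := by
  have := hA.dotProduct_mulVec_nonneg (Pi.single i 1)
  simpa [dotProduct, Matrix.mulVec, Pi.single_apply] using this

lemma aux_entry_sq {m : ℕ} {A : Matrix (Fin m) (Fin m) ℝ} (hA : A.PosSemidef) (i j : Fin m) :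
    (A i j)^2 ≤ A i i * A j j := by
  have hsym : A j i = A i j := by
    conv_lhs => rw [← hA.1]
    rfl
  have key : ∀ t : ℝ, 0 ≤ A i i * (t * t) + (2 * A i j) * t + A j j := by
    intro t
    have h := hA.dotProduct_mulVec_nonneg (t • (Pi.single i 1 : Fin m → ℝ) + Pi.single j 1)
    simp only [star_trivial, RCLike.re_to_real, dotProduct_add, add_dotProduct,
      Matrix.mulVec_add, Matrix.mulVec_smul, smul_dotProduct, dotProduct_smul,
      Matrix.mulVec_single, single_dotProduct, smul_eq_mul, mul_one, one_mul,
      Pi.smul_apply, Matrix.col_apply, op_smul_eq_mul] at h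
    rw [hsym] at h
    ring_nf at h ⊢
    linarith
  have hd := discrim_le_zero key
  simp only [discrim] at hd
  nlinarith [hd]

/-- For a PSD matrix, the Frobenius norm is at most the trace. -/
lemma aux_frob_le_trace {m : ℕ} {A : Matrix (Fin m) (Fin m) ℝ} (hA : A.PosSemidef) :
    frobNorm A ≤ A.trace := by
  have htr : A.trace = ∑ i : Fin m, A i i := rfl
  have h1 : ∑ n : Fin m, ∑ o : Fin m, (A n o) ^ 2 ≤ (∑ i : Fin m, A i i) ^ 2 := by
    rw [sq, Finset.sum_mul_sum]
    exact Finset.sum_le_sum fun n _ => Finset.sum_le_sum fun o _ => aux_entry_sq hA n o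
  have htrnn : 0 ≤ ∑ i : Fin m, A i i := Finset.sum_nonneg fun i _ => aux_diag_nn hA i
  calc frobNorm A ≤ Real.sqrt ((∑ i : Fin m, A i i) ^ 2) := Real.sqrt_le_sqrt h1
    _ = ∑ i : Fin m, A i i := Real.sqrt_sq htrnn
    _ = A.trace := htr.symm

/-- For any matrix with nonnegative trace, the trace is at most `√m` times the Frobenius norm. -/
lemma aux_trace_le {m : ℕ} {A : Matrix (Fin m) (Fin m) ℝ} (hA : A.PosSemidef) :
    A.trace ≤ Real.sqrt m * frobNorm A := by
  have htr : A.trace = ∑ i : Fin m, A i i := rfl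
  have htrnn : 0 ≤ A.trace := by
    rw [htr]; exact Finset.sum_nonneg fun i _ => aux_diag_nn hA i
  have h1 : (∑ i : Fin m, A i i) ^ 2 ≤ (m : ℝ) * ∑ i : Fin m, (A i i) ^ 2 := by
    have := sq_sum_le_card_mul_sum_sq (s := (Finset.univ : Finset (Fin m))) (f := fun i => A i i)
    simpa using this
  have h2 : ∑ i : Fin m, (A i i) ^ 2 ≤ ∑ n : Fin m, ∑ o : Fin m, (A n o) ^ 2 :=
    Finset.sum_le_sum fun n _ => Finset.single_le_sum (f := fun o => (A n o) ^ 2)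
      (fun o _ => sq_nonneg _) (Finset.mem_univ n)
  have hsq : A.trace ^ 2 ≤ (m : ℝ) * ∑ n : Fin m, ∑ o : Fin m, (A n o) ^ 2 := by
    rw [htr]
    calc (∑ i : Fin m, A i i) ^ 2 ≤ (m : ℝ) * ∑ i : Fin m, (A i i) ^ 2 := h1
      _ ≤ (m : ℝ) * ∑ n : Fin m, ∑ o : Fin m, (A n o) ^ 2 := by
          apply mul_le_mul_of_nonneg_left h2 (by positivity)
  calc A.trace = Real.sqrt (A.trace ^ 2) := (Real.sqrt_sq htrnn).symm
    _ ≤ Real.sqrt ((m : ℝ) * ∑ n : Fin m, ∑ o : Fin m, (A n o) ^ 2) := Real.sqrt_le_sqrt hsq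
    _ = Real.sqrt m * frobNorm A := Real.sqrt_mul (Nat.cast_nonneg m) _

/-- Lemma 3: for symmetric positive-semidefinite matrices `M_k`,
`Σ_{k=1}^j ‖M_k‖_F ≤ √m ‖Σ_{k=1}^j M_k‖_F`. -/
theorem stmt_12 (m : ℕ) (hm : 0 < m) (M : ℕ → Matrix (Fin m) (Fin m) ℝ)
    (hM : ∀ k : ℕ, 1 ≤ k → (M k).PosSemidef) :
    ∀ j : ℕ, 1 ≤ j →
      ∑ k ∈ Icc 1 j, frobNorm (M k) ≤ Real.sqrt m * frobNorm (∑ k ∈ Icc 1 j, M k) := by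
  intro j hj
  have hsum : (∑ k ∈ Icc 1 j, M k).PosSemidef := by
    refine Finset.sum_induction M Matrix.PosSemidef
      (fun a b ha hb => ha.add hb) Matrix.PosSemidef.zero (fun k hk => ?_)
    exact hM k (Finset.mem_Icc.mp hk).1
  calc ∑ k ∈ Icc 1 j, frobNorm (M k)
      ≤ ∑ k ∈ Icc 1 j, (M k).trace :=
        Finset.sum_le_sum fun k hk => aux_frob_le_trace (hM k (Finset.mem_Icc.mp hk).1)
    _ = (∑ k ∈ Icc 1 j, M k).trace := (Matrix.trace_sum _ _).symm
    _ ≤ Real.sqrt m * frobNorm (∑ k ∈ Icc 1 j, M k) := aux_trace_le hsum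
end
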